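/- Let r be a graphon with η ≤ r ≤ 1−η on [0,1]^2 for some η > 0. There exist C > 0 and ε_0 ∈ (0,1) such that for all ε ∈ (0,ε_0) and all measurable symmetric Δ:[0,1]^2→[0,1] with ‖T_{1−Δ}‖ = 1−ε, one has I_r(1) − I_r(1−Δ) ≤ ε log(1/ε) + Cε; in particular C^1_r − ψ_r(1−ε) ≤ ε log(1/ε) + Cε. -/

import Mathlib

open MeasureTheory Real Filter Set Topology

noncomputable section

/-- The unit interval `[0,1]` as a subset of `ℝ`. -/
def UI : Set ℝ := Set.Icc 0 1

/-- A graphon: a symmetric measurable function `[0,1]² → [0,1]`. -/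
def IsGraphon (h : ℝ → ℝ → ℝ) : Prop :=
  Measurable (Function.uncurry h) ∧ (∀ x y, h x y = h y x) ∧
    ∀ x ∈ UI, ∀ y ∈ UI, h x y ∈ Set.Icc (0:ℝ) 1

/-- The operator norm of the integral operator `T_h` on `L²([0,1])` associated with a
symmetric bounded kernel `h`, expressed via its quadratic form. -/
def gOpNorm (h : ℝ → ℝ → ℝ) : ℝ :=
  sSup {t : ℝ | ∃ u : ℝ → ℝ, Measurable u ∧ IntegrableOn (fun x => u x ^ 2) UI ∧
    (∫ x in UI, u x ^ 2) ≤ 1 ∧ t = |∫ x in UI, ∫ y in UI, u x * h x y * u y|}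

/-- Relative entropy of Bernoulli(a) with respect to Bernoulli(b), with `0 log 0 = 0`. -/
def relEnt (a b : ℝ) : ℝ :=
  a * Real.log (a / b) + (1 - a) * Real.log ((1 - a) / (1 - b))

/-- The rate function `I_r(h) = ∫∫ R(h(x,y) | r(x,y)) dx dy`. -/
def Ient (r h : ℝ → ℝ → ℝ) : ℝ := ∫ x in UI, ∫ y in UI, relEnt (h x y) (r x y)

/-- The rate function `ψ_r(β) = inf { I_r(h) : h graphon, ‖T_h‖ = β }`. -/
def psiRate (r : ℝ → ℝ → ℝ) (β : ℝ) : ℝ :=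
  sInf {c : ℝ | ∃ h : ℝ → ℝ → ℝ, IsGraphon h ∧ gOpNorm h = β ∧ Ient r h = c}

/-- The `L²([0,1]²)` norm of a kernel. -/
def L2norm2 (f : ℝ → ℝ → ℝ) : ℝ := Real.sqrt (∫ x in UI, ∫ y in UI, f x y ^ 2)

end

namespace Aux

open Function

lemma msUI : MeasurableSet UI := measurableSet_Icc

noncomputable abbrev μUI : Measure ℝ := MeasureTheory.volume.restrict UI

instance : IsProbabilityMeasure μUI :=
  ⟨by simp [μUI, UI, Real.volume_Icc]⟩

lemma aeUI : ∀ᵐ x ∂μUI, x ∈ UI := ae_restrict_mem msUI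

/-- integrability from boundedness on UI -/
lemma int_of_bdd {f : ℝ → ℝ} {c : ℝ}
    (hm : AEStronglyMeasurable f μUI) (hb : ∀ x ∈ UI, |f x| ≤ c) :
    Integrable f μUI := by
  refine Integrable.mono' (integrable_const c) hm ?_
  filter_upwards [aeUI] with x hx
  simpa [Real.norm_eq_abs] using hb x hx

/-- L¹ from L² -/
lemma int_of_sq {f : ℝ → ℝ} (hm : AEStronglyMeasurable f μUI)
    (h2 : Integrable (fun x => f x ^ 2) μUI) : Integrable f μUI := by
  refine Integrable.mono' (((integrable_const (1:ℝ)).add h2).div_const 2) hm ?_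
  filter_upwards with x
  have h := sq_nonneg (|f x| - 1)
  have : |f x| ≤ (1 + f x ^ 2) / 2 := by nlinarith [sq_abs (f x)]
  simpa [Real.norm_eq_abs] using this

/-- Cauchy–Schwarz -/
lemma cs {f g : ℝ → ℝ} (hfm : AEStronglyMeasurable f μUI) (hgm : AEStronglyMeasurable g μUI)
    (hf2 : Integrable (fun x => f x ^ 2) μUI) (hg2 : Integrable (fun x => g x ^ 2) μUI) :
    |∫ x, f x * g x ∂μUI| ≤ Real.sqrt (∫ x, f x ^ 2 ∂μUI) * Real.sqrt (∫ x, g x ^ 2 ∂μUI) := by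
  have hfg : Integrable (fun x => f x * g x) μUI := by
    refine Integrable.mono' ((hf2.add hg2).div_const 2) (hfm.mul hgm) ?_
    filter_upwards with x
    have : |f x * g x| ≤ (f x ^ 2 + g x ^ 2) / 2 := by
      rw [abs_mul]; nlinarith [sq_abs (f x), sq_abs (g x), sq_nonneg (|f x| - |g x|)]
    calc ‖f x * g x‖ = |f x * g x| := rfl
      _ ≤ (f x ^ 2 + g x ^ 2) / 2 := this
  set F := ∫ x, f x ^ 2 ∂μUI with hF
  set G := ∫ x, g x ^ 2 ∂μUI with hG
  set P := ∫ x, f x * g x ∂μUI with hP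
  have hF0 : 0 ≤ F := integral_nonneg fun x => sq_nonneg _
  have hG0 : 0 ≤ G := integral_nonneg fun x => sq_nonneg _
  -- key : P^2 ≤ F * G
  have key : P ^ 2 ≤ F * G := by
    rcases eq_or_lt_of_le hF0 with hF0' | hFpos
    · -- F = 0 → f = 0 a.e. → P = 0
      have hf0 : (fun x => f x ^ 2) =ᵐ[μUI] 0 :=
        (integral_eq_zero_iff_of_nonneg_ae (by filter_upwards with x using sq_nonneg _) hf2).mp
          hF0'.symm
      have hP0 : P = 0 := by
        rw [hP]
        refine integral_eq_zero_of_ae ?_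
        filter_upwards [hf0] with x hx
        have : f x = 0 := by
          have := hx; simp only [Pi.zero_apply] at this
          exact pow_eq_zero_iff (n := 2) (by norm_num) |>.mp this
        simp [this]
      rw [hP0]
      have := mul_nonneg hF0 hG0
      simpa using this
    · -- F > 0 : use 0 ≤ ∫ (G·? ) standard: 0 ≤ ∫ (F * g x - P * f x)^2
      have hexp : (0:ℝ) ≤ ∫ x, (F * g x - P * f x) ^ 2 ∂μUI :=
        integral_nonneg fun x => sq_nonneg _
      have hsplit : ∫ x, (F * g x - P * f x) ^ 2 ∂μUI
          = F ^ 2 * G - 2 * F * P * P + P ^ 2 * F := by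
        have : (fun x => (F * g x - P * f x) ^ 2)
            = fun x => F ^ 2 * g x ^ 2 - (2 * F * P) * (f x * g x) + P ^ 2 * f x ^ 2 := by
          funext x; ring
        have h1 : Integrable (fun x => F ^ 2 * g x ^ 2 - 2 * F * P * (f x * g x)) μUI :=
          (hg2.const_mul _).sub (hfg.const_mul _)
        have h2 : Integrable (fun x => P ^ 2 * f x ^ 2) μUI := hf2.const_mul _
        have h3 : Integrable (fun x => F ^ 2 * g x ^ 2) μUI := hg2.const_mul _
        have h4 : Integrable (fun x => 2 * F * P * (f x * g x)) μUI := hfg.const_mul _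
        rw [this]
        rw [integral_add h1 h2, integral_sub h3 h4, integral_const_mul,
          integral_const_mul, integral_const_mul]
      rw [hsplit] at hexp
      nlinarith [hFpos]
  calc |P| = Real.sqrt (P ^ 2) := (Real.sqrt_sq_eq_abs P).symm
    _ ≤ Real.sqrt (F * G) := Real.sqrt_le_sqrt key
    _ = Real.sqrt F * Real.sqrt G := Real.sqrt_mul hF0 _

end Aux

namespace Aux
open Function MeasureTheory Real Set

lemma UI0 : (0:ℝ) ∈ UI := ⟨le_refl 0, by norm_num⟩

lemma inner_sm {F : ℝ → ℝ → ℝ} (hF : Measurable (uncurry F)) :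
    StronglyMeasurable (fun x => ∫ y, F x y ∂μUI) :=
  hF.stronglyMeasurable.integral_prod_right'

lemma inner_bdd {F : ℝ → ℝ → ℝ} {c : ℝ} (hc : 0 ≤ c)
    (hb : ∀ x ∈ UI, ∀ y ∈ UI, |F x y| ≤ c) :
    ∀ x ∈ UI, |∫ y, F x y ∂μUI| ≤ c := by
  intro x hx
  have h := norm_integral_le_of_norm_le_const (μ := μUI) (f := F x) (C := c) ?_
  · simpa [Real.norm_eq_abs, measure_univ] using h
  · filter_upwards [aeUI] with y hy
    simpa [Real.norm_eq_abs] using hb x hx y hy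

lemma int_inner {F : ℝ → ℝ → ℝ} {c : ℝ} (hF : Measurable (uncurry F)) (hc : 0 ≤ c)
    (hb : ∀ x ∈ UI, ∀ y ∈ UI, |F x y| ≤ c) {x : ℝ} (hx : x ∈ UI) :
    Integrable (F x) μUI :=
  int_of_bdd hF.of_uncurry_left.aestronglyMeasurable (fun y hy => hb x hx y hy)

lemma int_marginal {F : ℝ → ℝ → ℝ} {c : ℝ} (hF : Measurable (uncurry F)) (hc : 0 ≤ c)
    (hb : ∀ x ∈ UI, ∀ y ∈ UI, |F x y| ≤ c) :
    Integrable (fun x => ∫ y, F x y ∂μUI) μUI :=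
  int_of_bdd (inner_sm hF).aestronglyMeasurable (inner_bdd hc hb)

lemma bdd_nonneg {F : ℝ → ℝ → ℝ} {c : ℝ} (hb : ∀ x ∈ UI, ∀ y ∈ UI, |F x y| ≤ c) :
    0 ≤ c := le_trans (abs_nonneg _) (hb 0 UI0 0 UI0)

lemma iint_mono {F G : ℝ → ℝ → ℝ} {c₁ c₂ : ℝ}
    (hF : Measurable (uncurry F)) (hG : Measurable (uncurry G))
    (hFb : ∀ x ∈ UI, ∀ y ∈ UI, |F x y| ≤ c₁) (hGb : ∀ x ∈ UI, ∀ y ∈ UI, |G x y| ≤ c₂)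
    (hle : ∀ x ∈ UI, ∀ y ∈ UI, F x y ≤ G x y) :
    (∫ x, ∫ y, F x y ∂μUI ∂μUI) ≤ ∫ x, ∫ y, G x y ∂μUI ∂μUI := by
  have hc₁ : 0 ≤ c₁ := bdd_nonneg hFb
  have hc₂ : 0 ≤ c₂ := bdd_nonneg hGb
  refine integral_mono_ae (int_marginal hF hc₁ hFb) (int_marginal hG hc₂ hGb) ?_
  filter_upwards [aeUI] with x hx
  refine integral_mono_ae (int_inner hF hc₁ hFb hx) (int_inner hG hc₂ hGb hx) ?_
  filter_upwards [aeUI] with y hy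
  exact hle x hx y hy

lemma iint_add {F G : ℝ → ℝ → ℝ} {c₁ c₂ : ℝ}
    (hF : Measurable (uncurry F)) (hG : Measurable (uncurry G))
    (hFb : ∀ x ∈ UI, ∀ y ∈ UI, |F x y| ≤ c₁) (hGb : ∀ x ∈ UI, ∀ y ∈ UI, |G x y| ≤ c₂) :
    (∫ x, ∫ y, (F x y + G x y) ∂μUI ∂μUI)
      = (∫ x, ∫ y, F x y ∂μUI ∂μUI) + ∫ x, ∫ y, G x y ∂μUI ∂μUI := by
  have hc₁ : 0 ≤ c₁ := bdd_nonneg hFb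
  have hc₂ : 0 ≤ c₂ := bdd_nonneg hGb
  have h1 : (∫ x, ∫ y, (F x y + G x y) ∂μUI ∂μUI)
      = ∫ x, ((∫ y, F x y ∂μUI) + ∫ y, G x y ∂μUI) ∂μUI := by
    refine integral_congr_ae ?_
    filter_upwards [aeUI] with x hx
    exact integral_add (int_inner hF hc₁ hFb hx) (int_inner hG hc₂ hGb hx)
  rw [h1, integral_add (int_marginal hF hc₁ hFb) (int_marginal hG hc₂ hGb)]

lemma iint_const_mul {F : ℝ → ℝ → ℝ} (c : ℝ) :
    (∫ x, ∫ y, c * F x y ∂μUI ∂μUI) = c * ∫ x, ∫ y, F x y ∂μUI ∂μUI := by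
  have h1 : (∫ x, ∫ y, c * F x y ∂μUI ∂μUI) = ∫ x, c * ∫ y, F x y ∂μUI ∂μUI := by
    refine integral_congr_ae ?_
    filter_upwards with x
    exact integral_const_mul c _
  rw [h1, integral_const_mul]

lemma iint_const (c : ℝ) : (∫ x, ∫ y, (fun _ _ => c) x y ∂μUI ∂μUI) = c := by
  simp [measure_univ]

lemma iint_nonneg {F : ℝ → ℝ → ℝ} (h0 : ∀ x ∈ UI, ∀ y ∈ UI, 0 ≤ F x y) :
    0 ≤ ∫ x, ∫ y, F x y ∂μUI ∂μUI := by
  refine integral_nonneg_of_ae ?_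
  filter_upwards [aeUI] with x hx
  refine integral_nonneg_of_ae ?_
  filter_upwards [aeUI] with y hy
  exact h0 x hx y hy

end Aux

namespace Aux
open Real

lemma mul_log_one_div_le {t : ℝ} (ht : 0 < t) : t * Real.log (1 / t) ≤ 1 - t := by
  have h := Real.log_le_sub_one_of_pos (x := 1 / t) (by positivity)
  have h2 : t * Real.log (1 / t) ≤ t * (1 / t - 1) :=
    mul_le_mul_of_nonneg_left h ht.le
  calc t * Real.log (1 / t) ≤ t * (1 / t - 1) := h2
    _ = 1 - t := by field_simp

lemma eps_log_le_one {ε : ℝ} (hε : 0 < ε) : ε * Real.log (1 / ε) ≤ 1 := by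
  have := mul_log_one_div_le hε
  linarith

lemma sq_log_le {t : ℝ} (ht : 0 < t) (ht1 : t ≤ 1) : t * Real.log (1 / t) ^ 2 ≤ 4 := by
  set s := Real.sqrt t with hs
  have hs0 : 0 < s := Real.sqrt_pos.mpr ht
  have hst : s ^ 2 = t := Real.sq_sqrt ht.le
  have hs1 : s ≤ 1 := by
    rw [hs, show (1:ℝ) = Real.sqrt 1 by rw [Real.sqrt_one]]
    exact Real.sqrt_le_sqrt ht1
  have hlog : Real.log (1 / t) = 2 * Real.log (1 / s) := by
    rw [← hst, one_div, one_div, ← inv_pow, Real.log_pow]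
    norm_num
  have hls : Real.log (1 / s) ≤ 1 / s := by
    have := Real.log_le_sub_one_of_pos (x := 1 / s) (by positivity)
    have h1 : (0:ℝ) < 1 / s := by positivity
    linarith
  have hls0 : 0 ≤ Real.log (1 / s) :=
    Real.log_nonneg (by rw [le_div_iff₀ hs0]; simpa using hs1)
  have hsq : Real.log (1 / s) ^ 2 ≤ (1 / s) ^ 2 := pow_le_pow_left₀ hls0 hls 2
  have h1s : (1 / s) ^ 2 = 1 / t := by rw [div_pow, one_pow, hst]
  rw [hlog]
  have : t * Real.log (1 / s) ^ 2 ≤ t * (1 / t) :=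
    le_trans (mul_le_mul_of_nonneg_left hsq ht.le) (by rw [h1s])
  have ht' : t * (1 / t) = 1 := by field_simp
  nlinarith [this]

section relEntLemmas

variable {a b ε η : ℝ}

lemma log_b_abs (hb1 : η ≤ b) (hb2 : b ≤ 1 - η) (hη : 0 < η) :
    -Real.log b ≤ Real.log (1 / η) ∧ Real.log b ≤ 0 := by
  constructor
  · rw [one_div, Real.log_inv]
    have := Real.log_le_log hη hb1
    linarith
  · exact Real.log_nonpos (by linarith) (by linarith)

lemma relEnt_pt (ha0 : 0 ≤ a) (ha1 : a ≤ 1) (hb1 : η ≤ b) (hb2 : b ≤ 1 - η)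
    (hη : 0 < η) (hε : 0 < ε) (hε1 : ε < 1) :
    relEnt 1 b - relEnt (1 - a) b
      ≤ a * (Real.log (1 / η) + 1) + a * Real.log (1 / max a ε) + ε := by
  have hb0 : (0:ℝ) < b := lt_of_lt_of_le hη hb1
  have h1b : (0:ℝ) < 1 - b := by linarith
  have e1 : relEnt 1 b = -Real.log b := by
    simp [relEnt, one_div, Real.log_inv]
  obtain ⟨hLb, hLb0⟩ := log_b_abs hb1 hb2 hη
  have hL1b0 : Real.log (1 - b) ≤ 0 := Real.log_nonpos (by linarith) (by linarith)
  by_cases ha0' : a = 0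
  · subst ha0'
    simp only [sub_zero, zero_mul, zero_add, mul_zero]
    have : relEnt 1 b - relEnt 1 b = 0 := by ring
    rw [this]
    linarith
  have hapos : 0 < a := lt_of_le_of_ne ha0 (Ne.symm ha0')
  have e2 : relEnt (1 - a) b
      = (1 - a) * Real.log ((1 - a) / b) + a * Real.log (a / (1 - b)) := by
    simp [relEnt, sub_sub_cancel]
  by_cases ha1' : a = 1
  · subst ha1'
    have hmax : max (1:ℝ) ε = 1 := max_eq_left hε1.le
    rw [e1, e2, hmax]
    simp only [sub_self, zero_mul, zero_add, one_mul]
    rw [Real.log_div one_ne_zero h1b.ne', Real.log_one]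
    have h11 : Real.log ((1:ℝ) / 1) = 0 := by norm_num
    rw [h11]
    linarith
  have haa : a < 1 := lt_of_le_of_ne ha1 ha1'
  have h1a : (0:ℝ) < 1 - a := by linarith
  -- expand
  have eL : relEnt 1 b - relEnt (1 - a) b
      = a * (Real.log (1 - b) - Real.log b) + (1 - a) * Real.log (1 / (1 - a))
        + a * Real.log (1 / a) := by
    rw [e1, e2, Real.log_div h1a.ne' hb0.ne', Real.log_div hapos.ne' h1b.ne',
      one_div, one_div, Real.log_inv, Real.log_inv]
    ring
  rw [eL]
  have hA : (1 - a) * Real.log (1 / (1 - a)) ≤ a := by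
    have := mul_log_one_div_le h1a
    linarith
  have hB : a * Real.log (1 / a) ≤ a * Real.log (1 / max a ε) + ε := by
    rcases le_total ε a with hae | hae
    · rw [max_eq_left hae]
      linarith
    · rw [max_eq_right hae]
      have hld : Real.log (1 / a) - Real.log (1 / ε)  = Real.log (ε / a) := by
        rw [one_div, one_div, Real.log_inv, Real.log_inv, Real.log_div hε.ne' hapos.ne']
        ring
      have h2 : Real.log (ε / a) ≤ ε / a - 1 := Real.log_le_sub_one_of_pos (by positivity)
      have h3 : a * Real.log (ε / a) ≤ a * (ε / a - 1) :=
        mul_le_mul_of_nonneg_left h2 ha0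
      have h4 : a * (ε / a - 1) = ε - a := by field_simp
      nlinarith [hld]
  have hC : a * (Real.log (1 - b) - Real.log b) ≤ a * Real.log (1 / η) := by
    apply mul_le_mul_of_nonneg_left _ ha0
    linarith
  have hsplit : a * (Real.log (1 / η) + 1) = a * Real.log (1 / η) + a := by ring
  linarith [hA, hB, hC]

lemma relEnt_bdd (ha0 : 0 ≤ a) (ha1 : a ≤ 1) (hb1 : η ≤ b) (hb2 : b ≤ 1 - η)
    (hη : 0 < η) :
    |relEnt (1 - a) b| ≤ 2 * (1 + Real.log (1 / η)) := by
  have hb0 : (0:ℝ) < b := lt_of_lt_of_le hη hb1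
  have h1b : (0:ℝ) < 1 - b := by linarith
  have hη2 : η ≤ 1/2 := by linarith
  obtain ⟨hLb, hLb0⟩ := log_b_abs hb1 hb2 hη
  have hL1b : -Real.log (1 - b) ≤ Real.log (1 / η) := by
    rw [one_div, Real.log_inv]
    have := Real.log_le_log hη (by linarith : η ≤ 1 - b)
    linarith
  have hL1b0 : Real.log (1 - b) ≤ 0 := Real.log_nonpos (by linarith) (by linarith)
  have hLη : 0 ≤ Real.log (1 / η) := by
    apply Real.log_nonneg
    rw [le_div_iff₀ hη]
    linarith
  have e2 : relEnt (1 - a) b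
      = (1 - a) * Real.log ((1 - a) / b) + a * Real.log (a / (1 - b)) := by
    simp [relEnt, sub_sub_cancel]
  rw [e2]
  have T1 : |(1 - a) * Real.log ((1 - a) / b)| ≤ 1 + Real.log (1 / η) := by
    by_cases ha1' : a = 1
    · subst ha1'
      simp only [sub_self, zero_mul, abs_zero]
      linarith
    · have h1a : (0:ℝ) < 1 - a := lt_of_le_of_ne (by linarith) (fun h => ha1' (by linarith))
      rw [Real.log_div h1a.ne' hb0.ne']
      have hup : (1 - a) * (Real.log (1 - a) - Real.log b)
          ≤ 1 + Real.log (1 / η) := by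
        have hneg : (1 - a) * Real.log (1 - a) ≤ 0 :=
          mul_nonpos_of_nonneg_of_nonpos h1a.le
            (Real.log_nonpos (by linarith) (by linarith))
        have : (1 - a) * (-Real.log b) ≤ 1 * Real.log (1/η) := by
          apply mul_le_mul (by linarith) hLb (by linarith) (by norm_num)
        nlinarith
      have hdn : -(1 + Real.log (1 / η)) ≤ (1 - a) * (Real.log (1 - a) - Real.log b) := by
        have h1 : -((1 - a) * Real.log (1 - a)) ≤ 1 := by
          have := mul_log_one_div_le h1a
          rw [one_div, Real.log_inv] at this
          linarith
        have h2 : (1 - a) * Real.log b ≤ 0 :=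
          mul_nonpos_of_nonneg_of_nonpos h1a.le hLb0
        have h3 : -((1 - a) * Real.log b) ≤ Real.log (1 / η) := by
          have : (1 - a) * (-Real.log b) ≤ 1 * Real.log (1/η) :=
            mul_le_mul (by linarith) hLb (by linarith) (by norm_num)
          nlinarith
        nlinarith
      rw [abs_le]; exact ⟨by linarith, by linarith⟩
  have T2 : |a * Real.log (a / (1 - b))| ≤ 1 + Real.log (1 / η) := by
    by_cases ha0' : a = 0
    · subst ha0'
      simp only [zero_mul, abs_zero]
      linarith
    · have hapos : 0 < a := lt_of_le_of_ne ha0 (Ne.symm ha0')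
      rw [Real.log_div hapos.ne' h1b.ne']
      have hup : a * (Real.log a - Real.log (1 - b)) ≤ 1 + Real.log (1 / η) := by
        have hneg : a * Real.log a ≤ 0 :=
          mul_nonpos_of_nonneg_of_nonpos ha0 (Real.log_nonpos ha0 ha1)
        have : a * (-Real.log (1 - b)) ≤ 1 * Real.log (1/η) :=
          mul_le_mul ha1 hL1b (by nlinarith) (by norm_num)
        nlinarith
      have hdn : -(1 + Real.log (1 / η)) ≤ a * (Real.log a - Real.log (1 - b)) := by
        have h1 : -(a * Real.log a) ≤ 1 := by
          have := mul_log_one_div_le hapos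
          rw [one_div, Real.log_inv] at this
          linarith
        have h2 : a * (-Real.log (1 - b)) ≥ 0 := by nlinarith
        nlinarith
      rw [abs_le]; exact ⟨by linarith, by linarith⟩
  calc |(1 - a) * Real.log ((1 - a) / b) + a * Real.log (a / (1 - b))|
      ≤ |(1 - a) * Real.log ((1 - a) / b)| + |a * Real.log (a / (1 - b))| := abs_add_le _ _
    _ ≤ 2 * (1 + Real.log (1 / η)) := by linarith

end relEntLemmas
end Aux

namespace Aux
open Function MeasureTheory Real Set

section Master

variable {K : ℝ → ℝ → ℝ} {v : ℝ → ℝ} {κ : ℝ}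

lemma master (hKm : Measurable (uncurry K))
    (hK0 : ∀ x ∈ UI, ∀ y ∈ UI, 0 ≤ K x y) (hK1 : ∀ x ∈ UI, ∀ y ∈ UI, K x y ≤ κ)
    (hv : Measurable v) (hv0 : ∀ x, 0 ≤ v x)
    (hv2 : Integrable (fun x => v x ^ 2) μUI) (hv21 : (∫ x, v x ^ 2 ∂μUI) ≤ 1) :
    (∫ x, ∫ y, K x y ∂μUI ∂μUI)
      ≤ (∫ x, ∫ y, v x * K x y * v y ∂μUI ∂μUI)
        + 2 * Real.sqrt (∫ x, (1 - v x) ^ 2 ∂μUI)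
            * Real.sqrt (∫ x, ∫ y, K x y ^ 2 ∂μUI ∂μUI) := by
  have hκ0 : 0 ≤ κ := le_trans (hK0 0 UI0 0 UI0) (hK1 0 UI0 0 UI0)
  have hKb : ∀ x ∈ UI, ∀ y ∈ UI, |K x y| ≤ κ := fun x hx y hy =>
    abs_le.mpr ⟨by linarith [hK0 x hx y hy], hK1 x hx y hy⟩
  have hK2m : Measurable (uncurry fun x y => K x y ^ 2) := by
    have : (uncurry fun x y => K x y ^ 2) = fun p => (uncurry K p) ^ 2 := rfl
    rw [this]; exact hKm.pow_const 2
  have hK2b : ∀ x ∈ UI, ∀ y ∈ UI, |K x y ^ 2| ≤ κ ^ 2 := by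
    intro x hx y hy
    rw [abs_pow]
    exact pow_le_pow_left₀ (abs_nonneg _) (hKb x hx y hy) 2
  have hvint : Integrable v μUI := int_of_sq hv.aestronglyMeasurable hv2
  have h1v : Integrable (fun x => 1 - v x) μUI := (integrable_const 1).sub hvint
  have h1v2 : Integrable (fun x => (1 - v x) ^ 2) μUI := by
    have e : (fun x => (1 - v x) ^ 2) = fun x => (1 : ℝ) - 2 * v x + v x ^ 2 := by
      funext x; ring
    rw [e]; exact ((integrable_const 1).sub (hvint.const_mul 2)).add hv2
  set cv : ℝ := ∫ x, v x ∂μUI with hcv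
  have hcv0 : 0 ≤ cv := integral_nonneg fun x => hv0 x
  set g : ℝ → ℝ := fun x => ∫ y, K x y ∂μUI with hgdef
  set q : ℝ → ℝ := fun x => ∫ y, K x y ^ 2 ∂μUI with hqdef
  set h : ℝ → ℝ := fun x => ∫ y, K x y * (1 - v y) ∂μUI with hhdef
  have hgm : StronglyMeasurable g := inner_sm hKm
  have hqm : StronglyMeasurable q := inner_sm hK2m
  have hhm : StronglyMeasurable h := by
    apply inner_sm
    have : (uncurry fun x y => K x y * (1 - v y))
        = fun p => uncurry K p * (1 - v p.2) := rfl
    rw [this]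
    exact hKm.mul (measurable_const.sub (hv.comp measurable_snd))
  have hq0 : ∀ x, 0 ≤ q x := fun x => integral_nonneg fun y => sq_nonneg _
  have hgb : ∀ x ∈ UI, |g x| ≤ κ := inner_bdd hκ0 hKb
  have hqb : ∀ x ∈ UI, |q x| ≤ κ ^ 2 := inner_bdd (by positivity) hK2b
  -- per-x integrability
  have hiK : ∀ x ∈ UI, Integrable (K x) μUI := fun x hx => int_inner hKm hκ0 hKb hx
  have hiKv : ∀ x ∈ UI, Integrable (fun y => K x y * v y) μUI := by
    intro x hx
    refine Integrable.mono' (hvint.abs.const_mul κ)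
      ((hKm.of_uncurry_left.mul hv).aestronglyMeasurable) ?_
    filter_upwards [aeUI] with y hy
    rw [Real.norm_eq_abs, abs_mul]
    exact mul_le_mul_of_nonneg_right (hKb x hx y hy) (abs_nonneg _)
  have hiK1v : ∀ x ∈ UI, Integrable (fun y => K x y * (1 - v y)) μUI := by
    intro x hx
    refine Integrable.mono' (h1v.abs.const_mul κ)
      ((hKm.of_uncurry_left.mul (measurable_const.sub hv)).aestronglyMeasurable) ?_
    filter_upwards [aeUI] with y hy
    rw [Real.norm_eq_abs, abs_mul]
    exact mul_le_mul_of_nonneg_right (hKb x hx y hy) (abs_nonneg _)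
  -- inner identity
  have inner_eq : ∀ x ∈ UI,
      (∫ y, K x y ∂μUI) - (∫ y, v x * K x y * v y ∂μUI)
        = (1 - v x) * g x + v x * h x := by
    intro x hx
    have e1 : (∫ y, v x * K x y * v y ∂μUI) = v x * ∫ y, K x y * v y ∂μUI := by
      have : (fun y => v x * K x y * v y) = fun y => v x * (K x y * v y) := by
        funext y; ring
      rw [this, integral_const_mul]
    have e2 : h x = g x - ∫ y, K x y * v y ∂μUI := by
      rw [hhdef]
      simp only
      have : (fun y => K x y * (1 - v y)) = fun y => K x y - K x y * v y := by
        funext y; ring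
      rw [this, integral_sub (hiK x hx) (hiKv x hx)]
    rw [e1]
    have : (∫ y, K x y * v y ∂μUI) = g x - h x := by rw [e2]; ring
    rw [this]
    ring
  -- outer marginal integrabilities
  have M1 : Integrable (fun x => ∫ y, K x y ∂μUI) μUI := int_marginal hKm hκ0 hKb
  have hvKvm : Measurable (uncurry fun x y => v x * K x y * v y) := by
    have : (uncurry fun x y => v x * K x y * v y)
        = fun p => v p.1 * uncurry K p * v p.2 := rfl
    rw [this]
    exact ((hv.comp measurable_fst).mul hKm).mul (hv.comp measurable_snd)
  have M2 : Integrable (fun x => ∫ y, v x * K x y * v y ∂μUI) μUI := by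
    refine Integrable.mono' ((hvint.const_mul (κ * cv)))
      (inner_sm hvKvm).aestronglyMeasurable ?_
    filter_upwards [aeUI] with x hx
    rw [Real.norm_eq_abs]
    have e1 : (∫ y, v x * K x y * v y ∂μUI) = v x * ∫ y, K x y * v y ∂μUI := by
      have : (fun y => v x * K x y * v y) = fun y => v x * (K x y * v y) := by
        funext y; ring
      rw [this, integral_const_mul]
    rw [e1, abs_mul, abs_of_nonneg (hv0 x)]
    have hKvb : |∫ y, K x y * v y ∂μUI| ≤ κ * cv := by
      have h1 : ‖∫ y, K x y * v y ∂μUI‖ ≤ ∫ y, ‖K x y * v y‖ ∂μUI :=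
        norm_integral_le_integral_norm _
      have h2 : (∫ y, ‖K x y * v y‖ ∂μUI) ≤ ∫ y, κ * v y ∂μUI := by
        refine integral_mono_of_nonneg (Eventually.of_forall fun y => norm_nonneg _)
          (hvint.const_mul κ) ?_
        filter_upwards [aeUI] with y hy
        rw [Real.norm_eq_abs, abs_mul, abs_of_nonneg (hv0 y)]
        exact mul_le_mul_of_nonneg_right (hKb x hx y hy) (hv0 y)
      rw [Real.norm_eq_abs] at h1
      rw [integral_const_mul] at h2
      exact le_trans h1 h2
    calc v x * |∫ y, K x y * v y ∂μUI| ≤ v x * (κ * cv) :=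
          mul_le_mul_of_nonneg_left hKvb (hv0 x)
      _ = κ * cv * v x := by ring
  have hhb : ∀ x ∈ UI, |h x| ≤ κ * (1 + cv) := by
    intro x hx
    have h1 : ‖h x‖ ≤ ∫ y, ‖K x y * (1 - v y)‖ ∂μUI := norm_integral_le_integral_norm _
    have h2 : (∫ y, ‖K x y * (1 - v y)‖ ∂μUI) ≤ ∫ y, κ * (1 + v y) ∂μUI := by
      refine integral_mono_of_nonneg (Eventually.of_forall fun y => norm_nonneg _)
        ((((integrable_const (1:ℝ)).add hvint)).const_mul κ) ?_
      filter_upwards [aeUI] with y hy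
      rw [Real.norm_eq_abs, abs_mul]
      have hb1 : |1 - v y| ≤ 1 + v y := by
        rw [abs_le]; constructor <;> nlinarith [hv0 y]
      exact mul_le_mul (hKb x hx y hy) hb1 (abs_nonneg _) hκ0
    have h3 : (∫ y, κ * (1 + v y) ∂μUI) = κ * (1 + cv) := by
      rw [integral_const_mul, integral_add (integrable_const 1) hvint]
      simp [measure_univ, hcv]
    rw [Real.norm_eq_abs] at h1
    rw [h3] at h2
    exact le_trans h1 h2
  have A1 : Integrable (fun x => (1 - v x) * g x) μUI := by
    refine Integrable.mono' (((integrable_const (1:ℝ)).add hvint).const_mul κ)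
      ((measurable_const.sub hv).aestronglyMeasurable.mul hgm.aestronglyMeasurable) ?_
    filter_upwards [aeUI] with x hx
    rw [Real.norm_eq_abs, abs_mul]
    have hb1 : |1 - v x| ≤ 1 + v x := by
      rw [abs_le]; constructor <;> nlinarith [hv0 x]
    calc |1 - v x| * |g x| ≤ (1 + v x) * κ :=
          mul_le_mul hb1 (hgb x hx) (abs_nonneg _) (by nlinarith [hv0 x])
      _ = κ * (1 + v x) := by ring
  have A2 : Integrable (fun x => v x * h x) μUI := by
    refine Integrable.mono' (hvint.const_mul (κ * (1 + cv)))
      (hv.aestronglyMeasurable.mul hhm.aestronglyMeasurable) ?_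
    filter_upwards [aeUI] with x hx
    rw [Real.norm_eq_abs, abs_mul, abs_of_nonneg (hv0 x)]
    calc v x * |h x| ≤ v x * (κ * (1 + cv)) :=
          mul_le_mul_of_nonneg_left (hhb x hx) (hv0 x)
      _ = κ * (1 + cv) * v x := by ring
  -- key identity
  have keyid : (∫ x, ∫ y, K x y ∂μUI ∂μUI) - (∫ x, ∫ y, v x * K x y * v y ∂μUI ∂μUI)
      = (∫ x, (1 - v x) * g x ∂μUI) + ∫ x, v x * h x ∂μUI := by
    rw [← integral_sub M1 M2, ← integral_add A1 A2]
    refine integral_congr_ae ?_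
    filter_upwards [aeUI] with x hx
    exact inner_eq x hx
  -- bounds on error terms
  set T : ℝ := ∫ x, (1 - v x) ^ 2 ∂μUI with hT
  set QQ : ℝ := ∫ x, q x ∂μUI with hQQ
  have hQQeq : QQ = ∫ x, ∫ y, K x y ^ 2 ∂μUI ∂μUI := rfl
  have hg2 : Integrable (fun x => g x ^ 2) μUI := by
    refine int_of_bdd (c := κ ^ 2) (hgm.measurable.pow_const 2).aestronglyMeasurable ?_
    intro x hx
    rw [abs_pow]
    exact pow_le_pow_left₀ (abs_nonneg _) (hgb x hx) 2
  have hqint : Integrable q μUI := int_of_bdd hqm.aestronglyMeasurable hqb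
  have hgq : ∀ x ∈ UI, g x ^ 2 ≤ q x := by
    intro x hx
    have h := cs (f := K x) (g := fun _ => (1:ℝ))
      hKm.of_uncurry_left.aestronglyMeasurable aestronglyMeasurable_const
      (int_inner hK2m (by positivity) hK2b hx) (by simpa using (integrable_const (1:ℝ)))
    simp only [mul_one, one_pow] at h
    have h1 : (∫ (y:ℝ), (1:ℝ) ∂μUI) = 1 := by simp [measure_univ]
    rw [h1, Real.sqrt_one, mul_one] at h
    have : |g x| ^ 2 ≤ Real.sqrt (q x) ^ 2 := pow_le_pow_left₀ (abs_nonneg _) h 2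
    rw [Real.sq_sqrt (hq0 x), sq_abs] at this
    exact this
  have hgq2 : (∫ x, g x ^ 2 ∂μUI) ≤ QQ := by
    refine integral_mono_ae hg2 hqint ?_
    filter_upwards [aeUI] with x hx
    exact hgq x hx
  have hT0 : 0 ≤ T := integral_nonneg fun x => sq_nonneg _
  have hQQ0 : 0 ≤ QQ := integral_nonneg fun x => hq0 x
  have E1 : |∫ x, (1 - v x) * g x ∂μUI| ≤ Real.sqrt T * Real.sqrt QQ := by
    have h := cs (f := fun x => 1 - v x) (g := g)
      (measurable_const.sub hv).aestronglyMeasurable hgm.aestronglyMeasurable h1v2 hg2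
    refine le_trans h ?_
    exact mul_le_mul_of_nonneg_left (Real.sqrt_le_sqrt hgq2) (Real.sqrt_nonneg _)
  have E2 : |∫ x, v x * h x ∂μUI| ≤ Real.sqrt T * Real.sqrt QQ := by
    have habs : |∫ x, v x * h x ∂μUI| ≤ ∫ x, v x * |h x| ∂μUI := by
      have h1 : ‖∫ x, v x * h x ∂μUI‖ ≤ ∫ x, ‖v x * h x‖ ∂μUI :=
        norm_integral_le_integral_norm _
      rw [Real.norm_eq_abs] at h1
      refine le_trans h1 (le_of_eq (integral_congr_ae ?_))
      filter_upwards with x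
      rw [Real.norm_eq_abs, abs_mul, abs_of_nonneg (hv0 x)]
    have hperx : ∀ x ∈ UI, |h x| ≤ Real.sqrt (q x) * Real.sqrt T := by
      intro x hx
      exact cs (f := K x) (g := fun y => 1 - v y)
        hKm.of_uncurry_left.aestronglyMeasurable
        (measurable_const.sub hv).aestronglyMeasurable
        (int_inner hK2m (by positivity) hK2b hx) h1v2
    have hsqm : Measurable fun x => Real.sqrt (q x) := hqm.measurable.sqrt
    have hvq : (∫ x, v x * |h x| ∂μUI) ≤ ∫ x, v x * (Real.sqrt (q x) * Real.sqrt T) ∂μUI := by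
      refine integral_mono_ae ?_ ?_ ?_
      · refine Integrable.mono' (hvint.const_mul (κ * (1 + cv)))
          (hv.aestronglyMeasurable.mul hhm.measurable.norm.aestronglyMeasurable) ?_
        filter_upwards [aeUI] with x hx
        rw [Real.norm_eq_abs, abs_mul, abs_of_nonneg (hv0 x), abs_abs]
        calc v x * |h x| ≤ v x * (κ * (1 + cv)) :=
              mul_le_mul_of_nonneg_left (hhb x hx) (hv0 x)
          _ = κ * (1 + cv) * v x := by ring
      · refine Integrable.mono' (hvint.const_mul (κ * Real.sqrt T))
          (hv.aestronglyMeasurable.mul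
            ((hsqm.mul_const _).aestronglyMeasurable)) ?_
        filter_upwards [aeUI] with x hx
        rw [Real.norm_eq_abs, abs_mul, abs_of_nonneg (hv0 x)]
        have hq1 : Real.sqrt (q x) ≤ κ := by
          have : q x ≤ κ ^ 2 := le_trans (le_abs_self _) (hqb x hx)
          calc Real.sqrt (q x) ≤ Real.sqrt (κ ^ 2) := Real.sqrt_le_sqrt this
            _ = κ := by rw [Real.sqrt_sq hκ0]
        have : |Real.sqrt (q x) * Real.sqrt T| ≤ κ * Real.sqrt T := by
          rw [abs_of_nonneg (by positivity)]
          exact mul_le_mul_of_nonneg_right hq1 (Real.sqrt_nonneg _)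
        calc v x * |Real.sqrt (q x) * Real.sqrt T| ≤ v x * (κ * Real.sqrt T) :=
              mul_le_mul_of_nonneg_left this (hv0 x)
          _ = κ * Real.sqrt T * v x := by ring
      · filter_upwards [aeUI] with x hx
        exact mul_le_mul_of_nonneg_left (hperx x hx) (hv0 x)
    have hpull : (∫ x, v x * (Real.sqrt (q x) * Real.sqrt T) ∂μUI)
        = Real.sqrt T * ∫ x, v x * Real.sqrt (q x) ∂μUI := by
      rw [← integral_const_mul]
      refine integral_congr_ae ?_
      filter_upwards with x
      ring
    have hsq2 : Integrable (fun x => Real.sqrt (q x) ^ 2) μUI := by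
      refine int_of_bdd (c := κ ^ 2) (hsqm.pow_const 2).aestronglyMeasurable ?_
      intro x hx
      rw [Real.sq_sqrt (hq0 x)]
      exact hqb x hx
    have hcs2 : (∫ x, v x * Real.sqrt (q x) ∂μUI)
        ≤ Real.sqrt (∫ x, v x ^ 2 ∂μUI) * Real.sqrt (∫ x, Real.sqrt (q x) ^ 2 ∂μUI) := by
      refine le_trans (le_abs_self _) ?_
      exact cs hv.aestronglyMeasurable hsqm.aestronglyMeasurable hv2 hsq2
    have hsqq : (∫ x, Real.sqrt (q x) ^ 2 ∂μUI) = QQ := by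
      refine integral_congr_ae ?_
      filter_upwards with x
      rw [Real.sq_sqrt (hq0 x)]
    have hv2s : Real.sqrt (∫ x, v x ^ 2 ∂μUI) ≤ 1 := by
      calc Real.sqrt (∫ x, v x ^ 2 ∂μUI) ≤ Real.sqrt 1 := Real.sqrt_le_sqrt hv21
        _ = 1 := Real.sqrt_one
    have hfin : (∫ x, v x * Real.sqrt (q x) ∂μUI) ≤ Real.sqrt QQ := by
      rw [hsqq] at hcs2
      refine le_trans hcs2 ?_
      calc Real.sqrt (∫ x, v x ^ 2 ∂μUI) * Real.sqrt QQ ≤ 1 * Real.sqrt QQ :=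
            mul_le_mul_of_nonneg_right hv2s (Real.sqrt_nonneg _)
        _ = Real.sqrt QQ := one_mul _
    calc |∫ x, v x * h x ∂μUI| ≤ ∫ x, v x * |h x| ∂μUI := habs
      _ ≤ ∫ x, v x * (Real.sqrt (q x) * Real.sqrt T) ∂μUI := hvq
      _ = Real.sqrt T * ∫ x, v x * Real.sqrt (q x) ∂μUI := hpull
      _ ≤ Real.sqrt T * Real.sqrt QQ :=
          mul_le_mul_of_nonneg_left hfin (Real.sqrt_nonneg _)
  have hle : (∫ x, ∫ y, K x y ∂μUI ∂μUI) - (∫ x, ∫ y, v x * K x y * v y ∂μUI ∂μUI)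
      ≤ 2 * Real.sqrt T * Real.sqrt QQ := by
    rw [keyid]
    nlinarith [abs_le.mp E1, abs_le.mp E2]
  have hfinal : (∫ x, ∫ y, K x y ∂μUI ∂μUI)
      ≤ (∫ x, ∫ y, v x * K x y * v y ∂μUI ∂μUI)
        + 2 * Real.sqrt T * Real.sqrt QQ := by linarith [hle]
  exact hfinal

end Master
end Aux

namespace Aux
open Function MeasureTheory Real Set

section Quad

variable {K K1 K2 : ℝ → ℝ → ℝ} {v : ℝ → ℝ} {κ κ1 κ2 : ℝ}

lemma quad_inner_int (hKm : Measurable (uncurry K)) (hκ0 : 0 ≤ κ)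
    (hKb : ∀ x ∈ UI, ∀ y ∈ UI, |K x y| ≤ κ) (hv : Measurable v)
    (hvint : Integrable v μUI) {x : ℝ} (hx : x ∈ UI) :
    Integrable (fun y => v x * K x y * v y) μUI := by
  refine Integrable.mono' (hvint.abs.const_mul (|v x| * κ))
    (((measurable_const.mul hKm.of_uncurry_left).mul hv).aestronglyMeasurable) ?_
  filter_upwards [aeUI] with y hy
  rw [Real.norm_eq_abs, abs_mul, abs_mul]
  have h1 : |v x| * |K x y| ≤ |v x| * κ :=
    mul_le_mul_of_nonneg_left (hKb x hx y hy) (abs_nonneg _)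
  calc |v x| * |K x y| * |v y| ≤ |v x| * κ * |v y| :=
        mul_le_mul_of_nonneg_right h1 (abs_nonneg _)
    _ = |v x| * κ * |v y| := rfl

lemma quad_uncurry_meas (hKm : Measurable (uncurry K)) (hv : Measurable v) :
    Measurable (uncurry fun x y => v x * K x y * v y) := by
  have : (uncurry fun x y => v x * K x y * v y)
      = fun p => v p.1 * uncurry K p * v p.2 := rfl
  rw [this]
  exact ((hv.comp measurable_fst).mul hKm).mul (hv.comp measurable_snd)

lemma quad_marginal_int (hKm : Measurable (uncurry K)) (hκ0 : 0 ≤ κ)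
    (hKb : ∀ x ∈ UI, ∀ y ∈ UI, |K x y| ≤ κ) (hv : Measurable v)
    (hvint : Integrable v μUI) :
    Integrable (fun x => ∫ y, v x * K x y * v y ∂μUI) μUI := by
  set cv : ℝ := ∫ y, |v y| ∂μUI with hcv
  have hcv0 : 0 ≤ cv := integral_nonneg fun y => abs_nonneg _
  refine Integrable.mono' (hvint.abs.const_mul (κ * cv))
    (inner_sm (quad_uncurry_meas hKm hv)).aestronglyMeasurable ?_
  filter_upwards [aeUI] with x hx
  rw [Real.norm_eq_abs]
  have h1 : |∫ y, v x * K x y * v y ∂μUI| ≤ ∫ y, |v x * K x y * v y| ∂μUI := by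
    have := norm_integral_le_integral_norm (μ := μUI) (f := fun y => v x * K x y * v y)
    simpa only [Real.norm_eq_abs] using this
  have h2 : (∫ y, |v x * K x y * v y| ∂μUI) ≤ ∫ y, κ * |v x| * |v y| ∂μUI := by
    refine integral_mono_of_nonneg (Eventually.of_forall fun y => abs_nonneg _)
      ((hvint.abs.const_mul _)) ?_
    filter_upwards [aeUI] with y hy
    rw [abs_mul, abs_mul]
    have hK1 : |v x| * |K x y| ≤ |v x| * κ :=
      mul_le_mul_of_nonneg_left (hKb x hx y hy) (abs_nonneg _)
    calc |v x| * |K x y| * |v y| ≤ |v x| * κ * |v y| :=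
          mul_le_mul_of_nonneg_right hK1 (abs_nonneg _)
      _ = κ * |v x| * |v y| := by ring
  have h3 : (∫ y, κ * |v x| * |v y| ∂μUI) = κ * cv * |v x| := by
    rw [integral_const_mul, hcv]
    ring
  calc |∫ y, v x * K x y * v y ∂μUI| ≤ ∫ y, |v x * K x y * v y| ∂μUI := h1
    _ ≤ ∫ y, κ * |v x| * |v y| ∂μUI := h2
    _ = κ * cv * |v x| := h3

lemma quad_mono (hK1m : Measurable (uncurry K1)) (hK2m : Measurable (uncurry K2))
    (hκ1 : 0 ≤ κ1) (hκ2 : 0 ≤ κ2)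
    (hK1b : ∀ x ∈ UI, ∀ y ∈ UI, |K1 x y| ≤ κ1) (hK2b : ∀ x ∈ UI, ∀ y ∈ UI, |K2 x y| ≤ κ2)
    (hv : Measurable v) (hv0 : ∀ x, 0 ≤ v x) (hvint : Integrable v μUI)
    (hle : ∀ x ∈ UI, ∀ y ∈ UI, K1 x y ≤ K2 x y) :
    (∫ x, ∫ y, v x * K1 x y * v y ∂μUI ∂μUI)
      ≤ ∫ x, ∫ y, v x * K2 x y * v y ∂μUI ∂μUI := by
  refine integral_mono_ae (quad_marginal_int hK1m hκ1 hK1b hv hvint)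
    (quad_marginal_int hK2m hκ2 hK2b hv hvint) ?_
  filter_upwards [aeUI] with x hx
  refine integral_mono_ae (quad_inner_int hK1m hκ1 hK1b hv hvint hx)
    (quad_inner_int hK2m hκ2 hK2b hv hvint hx) ?_
  filter_upwards [aeUI] with y hy
  exact mul_le_mul_of_nonneg_right
    (mul_le_mul_of_nonneg_left (hle x hx y hy) (hv0 x)) (hv0 y)

lemma quad_nonneg (hK0 : ∀ x ∈ UI, ∀ y ∈ UI, 0 ≤ K x y) (hv0 : ∀ x, 0 ≤ v x) :
    0 ≤ ∫ x, ∫ y, v x * K x y * v y ∂μUI ∂μUI := by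
  refine integral_nonneg_of_ae ?_
  filter_upwards [aeUI] with x hx
  refine integral_nonneg_of_ae ?_
  filter_upwards [aeUI] with y hy
  exact mul_nonneg (mul_nonneg (hv0 x) (hK0 x hx y hy)) (hv0 y)

lemma quad_pull_const (c : ℝ) :
    (∫ x, ∫ y, v x * (c * K x y) * v y ∂μUI ∂μUI)
      = c * ∫ x, ∫ y, v x * K x y * v y ∂μUI ∂μUI := by
  have hin : ∀ x, (∫ y, v x * (c * K x y) * v y ∂μUI)
      = c * ∫ y, v x * K x y * v y ∂μUI := by
    intro x
    rw [← integral_const_mul]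
    exact integral_congr_ae (Eventually.of_forall fun y => by ring)
  calc (∫ x, ∫ y, v x * (c * K x y) * v y ∂μUI ∂μUI)
      = ∫ x, c * ∫ y, v x * K x y * v y ∂μUI ∂μUI :=
        integral_congr_ae (Eventually.of_forall fun x => hin x)
    _ = c * ∫ x, ∫ y, v x * K x y * v y ∂μUI ∂μUI := integral_const_mul _ _

end Quad

section Test

variable {Δ : ℝ → ℝ → ℝ} {ε ζ : ℝ}

lemma exists_test (hΔm : Measurable (uncurry Δ))
    (hΔb : ∀ x ∈ UI, ∀ y ∈ UI, Δ x y ∈ Set.Icc (0:ℝ) 1)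
    (hnorm : gOpNorm (fun x y => 1 - Δ x y) = 1 - ε) (hζ : 0 < ζ) :
    ∃ v : ℝ → ℝ, Measurable v ∧ (∀ x, 0 ≤ v x) ∧
      Integrable (fun x => v x ^ 2) μUI ∧ (∫ x, v x ^ 2 ∂μUI) ≤ 1 ∧
      1 - ε - ζ < ∫ x, ∫ y, v x * (1 - Δ x y) * v y ∂μUI ∂μUI := by
  set S : Set ℝ := {t : ℝ | ∃ u : ℝ → ℝ, Measurable u ∧
    IntegrableOn (fun x => u x ^ 2) UI ∧ (∫ x in UI, u x ^ 2) ≤ 1 ∧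
    t = |∫ x in UI, ∫ y in UI, u x * (1 - Δ x y) * u y|} with hSdef
  have hS : sSup S = 1 - ε := hnorm
  have h0S : (0:ℝ) ∈ S := by
    refine ⟨fun _ => 0, measurable_const, ?_, ?_, ?_⟩
    · have : (fun x : ℝ => (0:ℝ) ^ 2) = fun _ : ℝ => (0:ℝ) := by funext x; norm_num
      rw [this]
      exact (integrableOn_const_iff).mpr (Or.inl (by simp))
    · simp
    · simp
  obtain ⟨t, htS, htgt⟩ := exists_lt_of_lt_csSup ⟨0, h0S⟩
    (by rw [hS]; linarith : 1 - ε - ζ < sSup S)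
  obtain ⟨u, hum, hui, hu1, htv⟩ := htS
  set v : ℝ → ℝ := fun x => |u x| with hvdef
  have hvm : Measurable v := continuous_abs.measurable.comp hum
  have hv0 : ∀ x, 0 ≤ v x := fun x => abs_nonneg _
  have hvsq : (fun x => v x ^ 2) = fun x => u x ^ 2 := by
    funext x; rw [hvdef]; simp [sq_abs]
  have hv2 : Integrable (fun x => v x ^ 2) μUI := by rw [hvsq]; exact hui
  have hv21 : (∫ x, v x ^ 2 ∂μUI) ≤ 1 := by rw [hvsq]; exact hu1
  have hvint : Integrable v μUI := int_of_sq hvm.aestronglyMeasurable hv2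
  refine ⟨v, hvm, hv0, hv2, hv21, ?_⟩
  have key : |∫ x in UI, ∫ y in UI, u x * (1 - Δ x y) * u y|
      ≤ ∫ x, ∫ y, v x * (1 - Δ x y) * v y ∂μUI ∂μUI := by
    have h1 : |∫ x in UI, ∫ y in UI, u x * (1 - Δ x y) * u y|
        ≤ ∫ x, |∫ y, u x * (1 - Δ x y) * u y ∂μUI| ∂μUI := by
      have := norm_integral_le_integral_norm (μ := μUI)
        (f := fun x => ∫ y, u x * (1 - Δ x y) * u y ∂μUI)
      simpa only [Real.norm_eq_abs] using this
    refine le_trans h1 ?_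
    have hKb : ∀ x ∈ UI, ∀ y ∈ UI, |(1:ℝ) - Δ x y| ≤ 1 := by
      intro x hx y hy
      obtain ⟨hd0, hd1⟩ := hΔb x hx y hy
      rw [abs_le]; constructor <;> linarith
    have hKm : Measurable (uncurry fun x y => (1:ℝ) - Δ x y) := by
      have : (uncurry fun x y => (1:ℝ) - Δ x y) = fun p => 1 - uncurry Δ p := rfl
      rw [this]; exact measurable_const.sub hΔm
    refine integral_mono_of_nonneg (Eventually.of_forall fun x => abs_nonneg _)
      (quad_marginal_int hKm zero_le_one hKb hvm hvint) ?_
    filter_upwards [aeUI] with x hx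
    have h2 : |∫ y, u x * (1 - Δ x y) * u y ∂μUI|
        ≤ ∫ y, |u x * (1 - Δ x y) * u y| ∂μUI := by
      have := norm_integral_le_integral_norm (μ := μUI)
        (f := fun y => u x * (1 - Δ x y) * u y)
      simpa only [Real.norm_eq_abs] using this
    refine le_trans h2 (le_of_eq (integral_congr_ae ?_))
    filter_upwards [aeUI] with y hy
    obtain ⟨hd0, hd1⟩ := hΔb x hx y hy
    rw [abs_mul, abs_mul, abs_of_nonneg (by linarith : (0:ℝ) ≤ 1 - Δ x y)]
  calc 1 - ε - ζ < t := htgt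
    _ = |∫ x in UI, ∫ y in UI, u x * (1 - Δ x y) * u y| := htv
    _ ≤ _ := key

end Test
end Aux

namespace Aux
open Function MeasureTheory Real Set

lemma meas_relEnt {f g : ℝ → ℝ → ℝ} (hf : Measurable (uncurry f))
    (hg : Measurable (uncurry g)) :
    Measurable (uncurry fun x y => relEnt (f x y) (g x y)) := by
  have : (uncurry fun x y => relEnt (f x y) (g x y))
      = fun p => (uncurry f p) * Real.log ((uncurry f p) / (uncurry g p))
        + (1 - uncurry f p) * Real.log ((1 - uncurry f p) / (1 - uncurry g p)) := rfl
  rw [this]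
  exact (hf.mul (Real.measurable_log.comp (hf.div hg))).add
    ((measurable_const.sub hf).mul (Real.measurable_log.comp
      ((measurable_const.sub hf).div (measurable_const.sub hg))))

lemma arith1 {d Q e sd se : ℝ} (hd : d ≤ Q + 2 * se * sd) (hQ : Q ≤ e + e ^ 2)
    (hsd : sd ^ 2 = d) (hse : se ^ 2 = 3 * e) (hsd0 : 0 ≤ sd) (hse0 : 0 ≤ se)
    (he : 0 < e) (heh : e < 1/2) : d ≤ 15 * e := by
  nlinarith [sq_nonneg (sd - 2 * se), mul_le_mul_of_nonneg_left heh.le he.le]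

set_option maxHeartbeats 1000000 in
lemma core {r : ℝ → ℝ → ℝ} {η : ℝ} (hη : 0 < η)
    (hrmeas : Measurable (uncurry r))
    (hrbound : ∀ x ∈ UI, ∀ y ∈ UI, r x y ∈ Set.Icc η (1 - η))
    {ε : ℝ} (hε0 : 0 < ε) (hεhalf : ε < 1/2)
    {Δ : ℝ → ℝ → ℝ} (hΔm : Measurable (uncurry Δ))
    (hΔb : ∀ x ∈ UI, ∀ y ∈ UI, Δ x y ∈ Set.Icc (0:ℝ) 1)
    (hnorm : gOpNorm (fun x y => 1 - Δ x y) = 1 - ε) :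
    Ient r (fun _ _ => 1) - Ient r (fun x y => 1 - Δ x y)
      ≤ ε * Real.log (1 / ε) + (15 * Real.log (1 / η) + 45) * ε := by
  obtain ⟨hr1, hr2⟩ := hrbound 0 UI0 0 UI0
  have hη2 : η ≤ 1/2 := by linarith
  have hε1 : ε < 1 := by linarith
  have hL0 : 0 ≤ Real.log (1 / ε) :=
    Real.log_nonneg (by rw [le_div_iff₀ hε0]; linarith)
  have hLη0 : 0 ≤ Real.log (1 / η) :=
    Real.log_nonneg (by rw [le_div_iff₀ hη]; linarith)
  have hεL1 : ε * Real.log (1 / ε) ≤ 1 := eps_log_le_one hε0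
  have hΔ0 : ∀ x ∈ UI, ∀ y ∈ UI, 0 ≤ Δ x y := fun x hx y hy => (hΔb x hx y hy).1
  have hΔ1 : ∀ x ∈ UI, ∀ y ∈ UI, Δ x y ≤ 1 := fun x hx y hy => (hΔb x hx y hy).2
  have hΔabs : ∀ x ∈ UI, ∀ y ∈ UI, |Δ x y| ≤ 1 := fun x hx y hy =>
    abs_le.mpr ⟨by linarith [hΔ0 x hx y hy], hΔ1 x hx y hy⟩
  -- test function
  obtain ⟨v, hvm, hv0, hv2, hv21, hVgt⟩ :=
    exists_test hΔm hΔb hnorm (ζ := ε ^ 2) (by positivity)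
  have hvint : Integrable v μUI := int_of_sq hvm.aestronglyMeasurable hv2
  have hK1m : Measurable (uncurry fun x y => (1:ℝ) - Δ x y) := by
    have : (uncurry fun x y => (1:ℝ) - Δ x y) = fun p => 1 - uncurry Δ p := rfl
    rw [this]; exact measurable_const.sub hΔm
  have hK1b : ∀ x ∈ UI, ∀ y ∈ UI, |(1:ℝ) - Δ x y| ≤ 1 := by
    intro x hx y hy
    obtain ⟨h1, h2⟩ := hΔb x hx y hy
    rw [abs_le]; constructor <;> linarith
  have hQ0 : 0 ≤ ∫ x, ∫ y, v x * Δ x y * v y ∂μUI ∂μUI := quad_nonneg hΔ0 hv0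
  -- quadratic identity : V' + Q = m²
  have hidQ : (∫ x, ∫ y, v x * (1 - Δ x y) * v y ∂μUI ∂μUI)
      + (∫ x, ∫ y, v x * Δ x y * v y ∂μUI ∂μUI) = (∫ x, v x ∂μUI) ^ 2 := by
    have inner_eq : ∀ x ∈ UI,
        (∫ y, v x * (1 - Δ x y) * v y ∂μUI) + (∫ y, v x * Δ x y * v y ∂μUI)
          = v x * ∫ y, v y ∂μUI := by
      intro x hx
      rw [← integral_add (quad_inner_int hK1m zero_le_one hK1b hvm hvint hx)
        (quad_inner_int hΔm zero_le_one hΔabs hvm hvint hx)]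
      have : (fun y => v x * (1 - Δ x y) * v y + v x * Δ x y * v y)
          = fun y => v x * v y := by funext y; ring
      rw [show (∫ y, (v x * (1 - Δ x y) * v y + v x * Δ x y * v y) ∂μUI)
          = ∫ y, v x * v y ∂μUI from integral_congr_ae (Eventually.of_forall fun y => by ring)]
      exact integral_const_mul _ _
    rw [← integral_add (quad_marginal_int hK1m zero_le_one hK1b hvm hvint)
      (quad_marginal_int hΔm zero_le_one hΔabs hvm hvint)]
    rw [show (∫ x, ((∫ y, v x * (1 - Δ x y) * v y ∂μUI)
        + ∫ y, v x * Δ x y * v y ∂μUI) ∂μUI)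
        = ∫ x, (v x * ∫ y, v y ∂μUI) ∂μUI from
      integral_congr_ae (by filter_upwards [aeUI] with x hx; exact inner_eq x hx)]
    rw [integral_mul_const]
    ring
  have hm0 : 0 ≤ ∫ x, v x ∂μUI := integral_nonneg hv0
  have hm1 : (∫ x, v x ∂μUI) ≤ 1 := by
    have hone : Integrable (fun x : ℝ => (1:ℝ) ^ 2) μUI := by
      simpa using integrable_const (1:ℝ)
    have hc := cs (f := v) (g := fun _ => (1:ℝ)) hvm.aestronglyMeasurable
      aestronglyMeasurable_const hv2 hone
    simp only [mul_one, one_pow] at hc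
    have h1 : (∫ (_ : ℝ), (1:ℝ) ∂μUI) = 1 := by simp [measure_univ]
    rw [h1, Real.sqrt_one, mul_one] at hc
    have h2 : Real.sqrt (∫ x, v x ^ 2 ∂μUI) ≤ 1 := by
      calc Real.sqrt (∫ x, v x ^ 2 ∂μUI) ≤ Real.sqrt 1 := Real.sqrt_le_sqrt hv21
        _ = 1 := Real.sqrt_one
    calc (∫ x, v x ∂μUI) ≤ |∫ x, v x ∂μUI| := le_abs_self _
      _ ≤ Real.sqrt (∫ x, v x ^ 2 ∂μUI) := hc
      _ ≤ 1 := h2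
  have hm2le : (∫ x, v x ∂μUI) ^ 2 ≤ 1 := by nlinarith
  have hQup : (∫ x, ∫ y, v x * Δ x y * v y ∂μUI ∂μUI) ≤ ε + ε ^ 2 := by
    nlinarith [hidQ, hm2le, hVgt]
  have hm2ge : 1 - ε - ε ^ 2 < (∫ x, v x ∂μUI) ^ 2 := by nlinarith [hidQ, hQ0, hVgt]
  -- T bound
  have hTexp : (∫ x, (1 - v x) ^ 2 ∂μUI)
      = 1 - 2 * (∫ x, v x ∂μUI) + ∫ x, v x ^ 2 ∂μUI := by
    have e : (fun x => (1 - v x) ^ 2) = fun x => ((1:ℝ) - 2 * v x) + v x ^ 2 := by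
      funext x; ring
    have i1 : Integrable (fun x => (1:ℝ) - 2 * v x) μUI :=
      (integrable_const 1).sub (hvint.const_mul 2)
    rw [e, integral_add i1 hv2, integral_sub (integrable_const 1) (hvint.const_mul 2),
      integral_const_mul]
    have h1 : (∫ (_ : ℝ), (1:ℝ) ∂μUI) = 1 := by simp [measure_univ]
    rw [h1]
  have hT0 : 0 ≤ ∫ x, (1 - v x) ^ 2 ∂μUI := integral_nonneg fun x => sq_nonneg _
  have hTle : (∫ x, (1 - v x) ^ 2 ∂μUI) ≤ 3 * ε := by
    have hmm : (∫ x, v x ∂μUI) ^ 2 ≤ (∫ x, v x ∂μUI) := by nlinarith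
    nlinarith [hTexp, hv21, hm2ge, hε0.le, hεhalf]
  -- master for Δ
  have hΔmaster := master (κ := 1) hΔm hΔ0 hΔ1 hvm hv0 hv2 hv21
  have hΔ2m : Measurable (uncurry fun x y => Δ x y ^ 2) := by
    have : (uncurry fun x y => Δ x y ^ 2) = fun p => (uncurry Δ p) ^ 2 := rfl
    rw [this]; exact hΔm.pow_const 2
  have hΔ2b : ∀ x ∈ UI, ∀ y ∈ UI, |Δ x y ^ 2| ≤ 1 := by
    intro x hx y hy
    rw [abs_pow]
    calc |Δ x y| ^ 2 ≤ 1 ^ 2 := pow_le_pow_left₀ (abs_nonneg _) (hΔabs x hx y hy) 2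
      _ = 1 := one_pow 2
  have hΔsqle : (∫ x, ∫ y, Δ x y ^ 2 ∂μUI ∂μUI) ≤ ∫ x, ∫ y, Δ x y ∂μUI ∂μUI := by
    refine iint_mono hΔ2m hΔm hΔ2b hΔabs ?_
    intro x hx y hy
    nlinarith [hΔ0 x hx y hy, hΔ1 x hx y hy]
  have hdbar0 : 0 ≤ ∫ x, ∫ y, Δ x y ∂μUI ∂μUI := iint_nonneg hΔ0
  have hΔsq0 : 0 ≤ ∫ x, ∫ y, Δ x y ^ 2 ∂μUI ∂μUI :=
    iint_nonneg fun x _ y _ => sq_nonneg _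
  have hd15 : (∫ x, ∫ y, Δ x y ∂μUI ∂μUI) ≤ 15 * ε := by
    have h1 : Real.sqrt (∫ x, ∫ y, Δ x y ^ 2 ∂μUI ∂μUI)
        ≤ Real.sqrt (∫ x, ∫ y, Δ x y ∂μUI ∂μUI) := Real.sqrt_le_sqrt hΔsqle
    have h2 : Real.sqrt (∫ x, (1 - v x) ^ 2 ∂μUI) ≤ Real.sqrt (3 * ε) :=
      Real.sqrt_le_sqrt hTle
    have h3 : (∫ x, ∫ y, Δ x y ∂μUI ∂μUI)
        ≤ (∫ x, ∫ y, v x * Δ x y * v y ∂μUI ∂μUI)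
          + 2 * Real.sqrt (3 * ε) * Real.sqrt (∫ x, ∫ y, Δ x y ∂μUI ∂μUI) := by
      refine le_trans hΔmaster ?_
      have := mul_le_mul h2 h1 (Real.sqrt_nonneg _) (Real.sqrt_nonneg _)
      nlinarith [this, Real.sqrt_nonneg (∫ x, (1 - v x) ^ 2 ∂μUI),
        Real.sqrt_nonneg (∫ x, ∫ y, Δ x y ^ 2 ∂μUI ∂μUI)]
    have hsq1 : Real.sqrt (∫ x, ∫ y, Δ x y ∂μUI ∂μUI) ^ 2
        = ∫ x, ∫ y, Δ x y ∂μUI ∂μUI := Real.sq_sqrt hdbar0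
    have hsq2 : Real.sqrt (3 * ε) ^ 2 = 3 * ε := Real.sq_sqrt (by positivity)
    exact arith1 h3 hQup hsq1 hsq2 (Real.sqrt_nonneg _) (Real.sqrt_nonneg _) hε0 hεhalf
  -- the weight kernel
  have hmaxpos : ∀ x y, 0 < max (Δ x y) ε := fun x y => lt_of_lt_of_le hε0 (le_max_right _ _)
  have hmax1 : ∀ x ∈ UI, ∀ y ∈ UI, max (Δ x y) ε ≤ 1 := fun x hx y hy =>
    max_le (hΔ1 x hx y hy) hε1.le
  have hW0 : ∀ x ∈ UI, ∀ y ∈ UI, 0 ≤ Real.log (1 / max (Δ x y) ε) := by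
    intro x hx y hy
    apply Real.log_nonneg
    rw [le_div_iff₀ (hmaxpos x y)]
    simpa using hmax1 x hx y hy
  have hWL : ∀ x ∈ UI, ∀ y ∈ UI,
      Real.log (1 / max (Δ x y) ε) ≤ Real.log (1 / ε) := by
    intro x hx y hy
    exact Real.log_le_log (by positivity)
      (one_div_le_one_div_of_le hε0 (le_max_right _ _))
  have hKWm : Measurable (uncurry fun x y => Δ x y * Real.log (1 / max (Δ x y) ε)) := by
    have : (uncurry fun x y => Δ x y * Real.log (1 / max (Δ x y) ε))
        = fun p => uncurry Δ p * Real.log (1 / max (uncurry Δ p) ε) := rfl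
    rw [this]
    exact hΔm.mul (Real.measurable_log.comp
      (measurable_const.div (hΔm.max measurable_const)))
  have hKW0 : ∀ x ∈ UI, ∀ y ∈ UI, 0 ≤ Δ x y * Real.log (1 / max (Δ x y) ε) :=
    fun x hx y hy => mul_nonneg (hΔ0 x hx y hy) (hW0 x hx y hy)
  have hKWL : ∀ x ∈ UI, ∀ y ∈ UI,
      Δ x y * Real.log (1 / max (Δ x y) ε) ≤ Real.log (1 / ε) := by
    intro x hx y hy
    calc Δ x y * Real.log (1 / max (Δ x y) ε)
        ≤ 1 * Real.log (1 / ε) :=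
          mul_le_mul (hΔ1 x hx y hy) (hWL x hx y hy) (hW0 x hx y hy) zero_le_one
      _ = Real.log (1 / ε) := one_mul _
  have hKWabs : ∀ x ∈ UI, ∀ y ∈ UI,
      |Δ x y * Real.log (1 / max (Δ x y) ε)| ≤ Real.log (1 / ε) := fun x hx y hy =>
    abs_le.mpr ⟨by linarith [hKW0 x hx y hy], hKWL x hx y hy⟩
  have hKWsq : ∀ x ∈ UI, ∀ y ∈ UI,
      (Δ x y * Real.log (1 / max (Δ x y) ε)) ^ 2 ≤ 4 * Δ x y := by
    intro x hx y hy
    have h1 : max (Δ x y) ε * Real.log (1 / max (Δ x y) ε) ^ 2 ≤ 4 :=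
      sq_log_le (hmaxpos x y) (hmax1 x hx y hy)
    have h2 : Δ x y * Real.log (1 / max (Δ x y) ε) ^ 2 ≤ 4 := by
      refine le_trans ?_ h1
      exact mul_le_mul_of_nonneg_right (le_max_left _ _) (sq_nonneg _)
    nlinarith [mul_le_mul_of_nonneg_left h2 (hΔ0 x hx y hy)]
  have hKW2m : Measurable (uncurry fun x y =>
      (Δ x y * Real.log (1 / max (Δ x y) ε)) ^ 2) := by
    have : (uncurry fun x y => (Δ x y * Real.log (1 / max (Δ x y) ε)) ^ 2)
        = fun p => (uncurry (fun x y => Δ x y * Real.log (1 / max (Δ x y) ε)) p) ^ 2 := rfl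
    rw [this]; exact hKWm.pow_const 2
  have hKW2b : ∀ x ∈ UI, ∀ y ∈ UI,
      |(Δ x y * Real.log (1 / max (Δ x y) ε)) ^ 2| ≤ Real.log (1 / ε) ^ 2 := by
    intro x hx y hy
    rw [abs_pow]
    exact pow_le_pow_left₀ (abs_nonneg _) (hKWabs x hx y hy) 2
  -- master for the weighted kernel
  have hWmaster := master (κ := Real.log (1 / ε)) hKWm hKW0 hKWL hvm hv0 hv2 hv21
  -- Q_W ≤ L * Q
  have hLΔm : Measurable (uncurry fun x y => Real.log (1 / ε) * Δ x y) := by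
    have : (uncurry fun x y => Real.log (1 / ε) * Δ x y)
        = fun p => Real.log (1 / ε) * uncurry Δ p := rfl
    rw [this]; exact measurable_const.mul hΔm
  have hLΔb : ∀ x ∈ UI, ∀ y ∈ UI, |Real.log (1 / ε) * Δ x y| ≤ Real.log (1 / ε) := by
    intro x hx y hy
    rw [abs_mul, abs_of_nonneg hL0]
    calc Real.log (1 / ε) * |Δ x y| ≤ Real.log (1 / ε) * 1 :=
          mul_le_mul_of_nonneg_left (hΔabs x hx y hy) hL0
      _ = Real.log (1 / ε) := mul_one _
  have hQWle : (∫ x, ∫ y, v x * (Δ x y * Real.log (1 / max (Δ x y) ε)) * v y ∂μUI ∂μUI)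
      ≤ Real.log (1 / ε) * ∫ x, ∫ y, v x * Δ x y * v y ∂μUI ∂μUI := by
    have h1 := quad_mono (κ1 := Real.log (1 / ε)) (κ2 := Real.log (1 / ε))
      hKWm hLΔm hL0 hL0 hKWabs hLΔb hvm hv0 hvint ?_
    · calc (∫ x, ∫ y, v x * (Δ x y * Real.log (1 / max (Δ x y) ε)) * v y ∂μUI ∂μUI)
          ≤ ∫ x, ∫ y, v x * (Real.log (1 / ε) * Δ x y) * v y ∂μUI ∂μUI := h1
        _ = Real.log (1 / ε) * ∫ x, ∫ y, v x * Δ x y * v y ∂μUI ∂μUI :=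
          quad_pull_const _
    · intro x hx y hy
      calc Δ x y * Real.log (1 / max (Δ x y) ε) ≤ Δ x y * Real.log (1 / ε) :=
            mul_le_mul_of_nonneg_left (hWL x hx y hy) (hΔ0 x hx y hy)
        _ = Real.log (1 / ε) * Δ x y := by ring
  -- ∫∫ KW² ≤ 4 dbar ≤ 60 ε
  have hKW2le : (∫ x, ∫ y, (Δ x y * Real.log (1 / max (Δ x y) ε)) ^ 2 ∂μUI ∂μUI)
      ≤ 4 * ∫ x, ∫ y, Δ x y ∂μUI ∂μUI := by
    have h4Δm : Measurable (uncurry fun x y => (4:ℝ) * Δ x y) := by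
      have : (uncurry fun x y => (4:ℝ) * Δ x y) = fun p => 4 * uncurry Δ p := rfl
      rw [this]; exact measurable_const.mul hΔm
    have h4Δb : ∀ x ∈ UI, ∀ y ∈ UI, |(4:ℝ) * Δ x y| ≤ 4 := by
      intro x hx y hy
      rw [abs_mul]
      calc |(4:ℝ)| * |Δ x y| ≤ 4 * 1 := by
            refine mul_le_mul (by norm_num) (hΔabs x hx y hy) (abs_nonneg _) (by norm_num)
        _ = 4 := by norm_num
    have := iint_mono hKW2m h4Δm hKW2b h4Δb hKWsq
    calc (∫ x, ∫ y, (Δ x y * Real.log (1 / max (Δ x y) ε)) ^ 2 ∂μUI ∂μUI)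
        ≤ ∫ x, ∫ y, 4 * Δ x y ∂μUI ∂μUI := this
      _ = 4 * ∫ x, ∫ y, Δ x y ∂μUI ∂μUI := iint_const_mul 4
  have hKW20 : 0 ≤ ∫ x, ∫ y, (Δ x y * Real.log (1 / max (Δ x y) ε)) ^ 2 ∂μUI ∂μUI :=
    iint_nonneg fun x _ y _ => sq_nonneg _
  -- error term ≤ 28 ε
  have herr : 2 * Real.sqrt (∫ x, (1 - v x) ^ 2 ∂μUI)
      * Real.sqrt (∫ x, ∫ y, (Δ x y * Real.log (1 / max (Δ x y) ε)) ^ 2 ∂μUI ∂μUI)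
      ≤ 28 * ε := by
    have h60 : (∫ x, ∫ y, (Δ x y * Real.log (1 / max (Δ x y) ε)) ^ 2 ∂μUI ∂μUI)
        ≤ 60 * ε := by linarith [hKW2le, hd15]
    have hs1 : Real.sqrt (∫ x, ∫ y, (Δ x y * Real.log (1 / max (Δ x y) ε)) ^ 2 ∂μUI ∂μUI)
        ≤ Real.sqrt (60 * ε) := Real.sqrt_le_sqrt h60
    have hs2 : Real.sqrt (∫ x, (1 - v x) ^ 2 ∂μUI) ≤ Real.sqrt (3 * ε) :=
      Real.sqrt_le_sqrt hTle
    have hprod : Real.sqrt (∫ x, (1 - v x) ^ 2 ∂μUI)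
        * Real.sqrt (∫ x, ∫ y, (Δ x y * Real.log (1 / max (Δ x y) ε)) ^ 2 ∂μUI ∂μUI)
        ≤ Real.sqrt (3 * ε) * Real.sqrt (60 * ε) :=
      mul_le_mul hs2 hs1 (Real.sqrt_nonneg _) (Real.sqrt_nonneg _)
    have e1 : Real.sqrt (3 * ε) * Real.sqrt (60 * ε) = Real.sqrt 180 * ε := by
      rw [← Real.sqrt_mul (by positivity : (0:ℝ) ≤ 3 * ε)]
      rw [show (3 * ε) * (60 * ε) = 180 * ε ^ 2 by ring]
      rw [Real.sqrt_mul (by norm_num : (0:ℝ) ≤ 180), Real.sqrt_sq hε0.le]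
    have e2 : Real.sqrt 180 ≤ 14 := by
      have h196 : Real.sqrt 196 = 14 := by
        rw [show (196:ℝ) = 14 ^ 2 by norm_num]
        exact Real.sqrt_sq (by norm_num)
      calc Real.sqrt 180 ≤ Real.sqrt 196 := Real.sqrt_le_sqrt (by norm_num)
        _ = 14 := h196
    calc 2 * Real.sqrt (∫ x, (1 - v x) ^ 2 ∂μUI)
        * Real.sqrt (∫ x, ∫ y, (Δ x y * Real.log (1 / max (Δ x y) ε)) ^ 2 ∂μUI ∂μUI)
        = 2 * (Real.sqrt (∫ x, (1 - v x) ^ 2 ∂μUI)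
          * Real.sqrt (∫ x, ∫ y, (Δ x y * Real.log (1 / max (Δ x y) ε)) ^ 2 ∂μUI ∂μUI)) := by
          ring
      _ ≤ 2 * (Real.sqrt (3 * ε) * Real.sqrt (60 * ε)) := by linarith [hprod]
      _ = 2 * (Real.sqrt 180 * ε) := by rw [e1]
      _ ≤ 2 * (14 * ε) := by nlinarith [e2, hε0.le]
      _ = 28 * ε := by ring
  -- conclude KW bound
  have hKWfin : (∫ x, ∫ y, Δ x y * Real.log (1 / max (Δ x y) ε) ∂μUI ∂μUI)
      ≤ ε * Real.log (1 / ε) + 29 * ε := by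
    have h1 : (∫ x, ∫ y, Δ x y * Real.log (1 / max (Δ x y) ε) ∂μUI ∂μUI)
        ≤ Real.log (1 / ε) * (∫ x, ∫ y, v x * Δ x y * v y ∂μUI ∂μUI) + 28 * ε := by
      linarith [hWmaster, hQWle, herr]
    have h2 : Real.log (1 / ε) * (∫ x, ∫ y, v x * Δ x y * v y ∂μUI ∂μUI)
        ≤ Real.log (1 / ε) * (ε + ε ^ 2) := mul_le_mul_of_nonneg_left hQup hL0
    have h3 : Real.log (1 / ε) * (ε + ε ^ 2)
        = ε * Real.log (1 / ε) + (ε * Real.log (1 / ε)) * ε := by ring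
    have h4 : (ε * Real.log (1 / ε)) * ε ≤ 1 * ε :=
      mul_le_mul_of_nonneg_right hεL1 hε0.le
    linarith
  -- entropy pointwise bound and integration
  have hAm : Measurable (uncurry fun x y => relEnt 1 (r x y)) := by
    have h1 : Measurable (uncurry fun (_ _ : ℝ) => (1:ℝ)) := by
      have : (uncurry fun (_ _ : ℝ) => (1:ℝ)) = fun _ => (1:ℝ) := rfl
      rw [this]; exact measurable_const
    exact meas_relEnt h1 hrmeas
  have hBm : Measurable (uncurry fun x y => relEnt (1 - Δ x y) (r x y)) :=
    meas_relEnt hK1m hrmeas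
  have hAb : ∀ x ∈ UI, ∀ y ∈ UI, |relEnt 1 (r x y)| ≤ 2 * (1 + Real.log (1 / η)) := by
    intro x hx y hy
    obtain ⟨hb1, hb2⟩ := hrbound x hx y hy
    have := relEnt_bdd (a := 0) (b := r x y) le_rfl zero_le_one hb1 hb2 hη
    simpa using this
  have hBb : ∀ x ∈ UI, ∀ y ∈ UI,
      |relEnt (1 - Δ x y) (r x y)| ≤ 2 * (1 + Real.log (1 / η)) := by
    intro x hx y hy
    obtain ⟨hb1, hb2⟩ := hrbound x hx y hy
    exact relEnt_bdd (hΔ0 x hx y hy) (hΔ1 x hx y hy) hb1 hb2 hη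
  have hpoint : ∀ x ∈ UI, ∀ y ∈ UI,
      relEnt 1 (r x y) ≤ relEnt (1 - Δ x y) (r x y)
        + ((Real.log (1 / η) + 1) * Δ x y
          + (Δ x y * Real.log (1 / max (Δ x y) ε) + ε)) := by
    intro x hx y hy
    obtain ⟨hb1, hb2⟩ := hrbound x hx y hy
    have := relEnt_pt (hΔ0 x hx y hy) (hΔ1 x hx y hy) hb1 hb2 hη hε0 hε1
    nlinarith [this]
  -- bounds for the combined kernel
  have hGm : Measurable (uncurry fun x y => relEnt (1 - Δ x y) (r x y)
      + ((Real.log (1 / η) + 1) * Δ x y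
        + (Δ x y * Real.log (1 / max (Δ x y) ε) + ε))) := by
    have hc1 : Measurable (uncurry fun x y => (Real.log (1 / η) + 1) * Δ x y) := by
      have : (uncurry fun x y => (Real.log (1 / η) + 1) * Δ x y)
          = fun p => (Real.log (1 / η) + 1) * uncurry Δ p := rfl
      rw [this]; exact measurable_const.mul hΔm
    have : (uncurry fun x y => relEnt (1 - Δ x y) (r x y)
        + ((Real.log (1 / η) + 1) * Δ x y
          + (Δ x y * Real.log (1 / max (Δ x y) ε) + ε)))
        = fun p => (uncurry fun x y => relEnt (1 - Δ x y) (r x y)) p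
          + ((uncurry fun x y => (Real.log (1 / η) + 1) * Δ x y) p
            + ((uncurry fun x y => Δ x y * Real.log (1 / max (Δ x y) ε)) p + ε)) := rfl
    rw [this]
    exact hBm.add (hc1.add (hKWm.add_const ε))
  have hc10 : 0 ≤ Real.log (1 / η) + 1 := by linarith
  have hGb : ∀ x ∈ UI, ∀ y ∈ UI,
      |relEnt (1 - Δ x y) (r x y) + ((Real.log (1 / η) + 1) * Δ x y
        + (Δ x y * Real.log (1 / max (Δ x y) ε) + ε))|
      ≤ 2 * (1 + Real.log (1 / η)) + ((Real.log (1 / η) + 1)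
        + (Real.log (1 / ε) + ε)) := by
    intro x hx y hy
    have h1 := hBb x hx y hy
    have h2 : |(Real.log (1 / η) + 1) * Δ x y| ≤ Real.log (1 / η) + 1 := by
      rw [abs_mul, abs_of_nonneg hc10]
      calc (Real.log (1 / η) + 1) * |Δ x y| ≤ (Real.log (1 / η) + 1) * 1 :=
            mul_le_mul_of_nonneg_left (hΔabs x hx y hy) hc10
        _ = Real.log (1 / η) + 1 := mul_one _
    have h3 := hKWabs x hx y hy
    have h4 : |ε| = ε := abs_of_nonneg hε0.le
    calc |relEnt (1 - Δ x y) (r x y) + ((Real.log (1 / η) + 1) * Δ x y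
        + (Δ x y * Real.log (1 / max (Δ x y) ε) + ε))|
        ≤ |relEnt (1 - Δ x y) (r x y)| + |(Real.log (1 / η) + 1) * Δ x y
          + (Δ x y * Real.log (1 / max (Δ x y) ε) + ε)| := abs_add_le _ _
      _ ≤ |relEnt (1 - Δ x y) (r x y)| + (|(Real.log (1 / η) + 1) * Δ x y|
          + |Δ x y * Real.log (1 / max (Δ x y) ε) + ε|) := by
            linarith [abs_add_le ((Real.log (1 / η) + 1) * Δ x y)
              (Δ x y * Real.log (1 / max (Δ x y) ε) + ε)]
      _ ≤ |relEnt (1 - Δ x y) (r x y)| + (|(Real.log (1 / η) + 1) * Δ x y|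
          + (|Δ x y * Real.log (1 / max (Δ x y) ε)| + |ε|)) := by
            linarith [abs_add_le (Δ x y * Real.log (1 / max (Δ x y) ε)) ε]
      _ ≤ 2 * (1 + Real.log (1 / η)) + ((Real.log (1 / η) + 1)
          + (Real.log (1 / ε) + ε)) := by
            rw [h4] at *
            linarith [h1, h2, h3]
  -- integrate the pointwise bound
  have hAG : (∫ x, ∫ y, relEnt 1 (r x y) ∂μUI ∂μUI)
      ≤ ∫ x, ∫ y, (relEnt (1 - Δ x y) (r x y) + ((Real.log (1 / η) + 1) * Δ x y
        + (Δ x y * Real.log (1 / max (Δ x y) ε) + ε))) ∂μUI ∂μUI :=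
    iint_mono hAm hGm hAb hGb hpoint
  -- split the sum
  have hc1m : Measurable (uncurry fun x y => (Real.log (1 / η) + 1) * Δ x y) := by
    have : (uncurry fun x y => (Real.log (1 / η) + 1) * Δ x y)
        = fun p => (Real.log (1 / η) + 1) * uncurry Δ p := rfl
    rw [this]; exact measurable_const.mul hΔm
  have hc1b : ∀ x ∈ UI, ∀ y ∈ UI,
      |(Real.log (1 / η) + 1) * Δ x y| ≤ Real.log (1 / η) + 1 := by
    intro x hx y hy
    rw [abs_mul, abs_of_nonneg hc10]
    calc (Real.log (1 / η) + 1) * |Δ x y| ≤ (Real.log (1 / η) + 1) * 1 :=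
          mul_le_mul_of_nonneg_left (hΔabs x hx y hy) hc10
      _ = Real.log (1 / η) + 1 := mul_one _
  have hKWεm : Measurable (uncurry fun x y =>
      Δ x y * Real.log (1 / max (Δ x y) ε) + ε) := by
    have : (uncurry fun x y => Δ x y * Real.log (1 / max (Δ x y) ε) + ε)
        = fun p => (uncurry fun x y => Δ x y * Real.log (1 / max (Δ x y) ε)) p + ε := rfl
    rw [this]; exact hKWm.add_const ε
  have hKWεb : ∀ x ∈ UI, ∀ y ∈ UI,
      |Δ x y * Real.log (1 / max (Δ x y) ε) + ε| ≤ Real.log (1 / ε) + ε := by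
    intro x hx y hy
    calc |Δ x y * Real.log (1 / max (Δ x y) ε) + ε|
        ≤ |Δ x y * Real.log (1 / max (Δ x y) ε)| + |ε| := abs_add_le _ _
      _ ≤ Real.log (1 / ε) + ε := by
          rw [abs_of_nonneg hε0.le]
          linarith [hKWabs x hx y hy]
  have hmidm : Measurable (uncurry fun x y => (Real.log (1 / η) + 1) * Δ x y
      + (Δ x y * Real.log (1 / max (Δ x y) ε) + ε)) := by
    have : (uncurry fun x y => (Real.log (1 / η) + 1) * Δ x y
        + (Δ x y * Real.log (1 / max (Δ x y) ε) + ε))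
        = fun p => (uncurry fun x y => (Real.log (1 / η) + 1) * Δ x y) p
          + (uncurry fun x y => Δ x y * Real.log (1 / max (Δ x y) ε) + ε) p := rfl
    rw [this]; exact hc1m.add hKWεm
  have hmidb : ∀ x ∈ UI, ∀ y ∈ UI,
      |(Real.log (1 / η) + 1) * Δ x y + (Δ x y * Real.log (1 / max (Δ x y) ε) + ε)|
      ≤ (Real.log (1 / η) + 1) + (Real.log (1 / ε) + ε) := by
    intro x hx y hy
    calc |(Real.log (1 / η) + 1) * Δ x y + (Δ x y * Real.log (1 / max (Δ x y) ε) + ε)|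
        ≤ |(Real.log (1 / η) + 1) * Δ x y|
          + |Δ x y * Real.log (1 / max (Δ x y) ε) + ε| := abs_add_le _ _
      _ ≤ (Real.log (1 / η) + 1) + (Real.log (1 / ε) + ε) := by
          linarith [hc1b x hx y hy, hKWεb x hx y hy]
  have hsplit1 : (∫ x, ∫ y, (relEnt (1 - Δ x y) (r x y)
      + ((Real.log (1 / η) + 1) * Δ x y
        + (Δ x y * Real.log (1 / max (Δ x y) ε) + ε))) ∂μUI ∂μUI)
      = (∫ x, ∫ y, relEnt (1 - Δ x y) (r x y) ∂μUI ∂μUI)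
        + ∫ x, ∫ y, ((Real.log (1 / η) + 1) * Δ x y
          + (Δ x y * Real.log (1 / max (Δ x y) ε) + ε)) ∂μUI ∂μUI :=
    iint_add hBm hmidm hBb hmidb
  have hsplit2 : (∫ x, ∫ y, ((Real.log (1 / η) + 1) * Δ x y
      + (Δ x y * Real.log (1 / max (Δ x y) ε) + ε)) ∂μUI ∂μUI)
      = (∫ x, ∫ y, (Real.log (1 / η) + 1) * Δ x y ∂μUI ∂μUI)
        + ∫ x, ∫ y, (Δ x y * Real.log (1 / max (Δ x y) ε) + ε) ∂μUI ∂μUI :=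
    iint_add hc1m hKWεm hc1b hKWεb
  have hsplit3 : (∫ x, ∫ y, (Δ x y * Real.log (1 / max (Δ x y) ε) + ε) ∂μUI ∂μUI)
      = (∫ x, ∫ y, Δ x y * Real.log (1 / max (Δ x y) ε) ∂μUI ∂μUI) + ε := by
    have h := iint_add (F := fun x y => Δ x y * Real.log (1 / max (Δ x y) ε))
      (G := fun _ _ => ε) hKWm (by
        have : (uncurry fun (_ _ : ℝ) => ε) = fun _ => ε := rfl
        rw [this]; exact measurable_const) hKWabs
      (fun x _ y _ => le_of_eq (abs_of_nonneg hε0.le))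
    rw [h, iint_const]
  have hsplit4 : (∫ x, ∫ y, (Real.log (1 / η) + 1) * Δ x y ∂μUI ∂μUI)
      = (Real.log (1 / η) + 1) * ∫ x, ∫ y, Δ x y ∂μUI ∂μUI :=
    iint_const_mul _
  -- final assembly
  have hIent1 : Ient r (fun _ _ => 1) = ∫ x, ∫ y, relEnt 1 (r x y) ∂μUI ∂μUI := rfl
  have hIent2 : Ient r (fun x y => 1 - Δ x y)
      = ∫ x, ∫ y, relEnt (1 - Δ x y) (r x y) ∂μUI ∂μUI := rfl
  rw [hIent1, hIent2]
  have hd15' : (Real.log (1 / η) + 1) * (∫ x, ∫ y, Δ x y ∂μUI ∂μUI)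
      ≤ (Real.log (1 / η) + 1) * (15 * ε) := mul_le_mul_of_nonneg_left hd15 hc10
  have hfin : (Real.log (1 / η) + 1) * (15 * ε)
      = 15 * Real.log (1 / η) * ε + 15 * ε := by ring
  have hgoal : (15 * Real.log (1 / η) + 45) * ε
      = 15 * Real.log (1 / η) * ε + 45 * ε := by ring
  linarith [hAG, hsplit1, hsplit2, hsplit3, hsplit4, hKWfin, hd15', hfin, hgoal]
end Aux

namespace Aux
open Function MeasureTheory Real Set

lemma gOpNorm_const {c : ℝ} (hc0 : 0 ≤ c) (hc1 : c ≤ 1) :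
    gOpNorm (fun _ _ => c) = c := by
  have h0S : (0:ℝ) ∈ {t : ℝ | ∃ u : ℝ → ℝ, Measurable u ∧
      IntegrableOn (fun x => u x ^ 2) UI ∧ (∫ x in UI, u x ^ 2) ≤ 1 ∧
      t = |∫ x in UI, ∫ y in UI, u x * c * u y|} := by
    refine ⟨fun _ => 0, measurable_const, ?_, by simp, by simp⟩
    have : (fun x : ℝ => (0:ℝ) ^ 2) = fun _ : ℝ => (0:ℝ) := by funext x; norm_num
    rw [this]
    exact (integrableOn_const_iff).mpr (Or.inl (by simp))
  have hub : ∀ t ∈ {t : ℝ | ∃ u : ℝ → ℝ, Measurable u ∧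
      IntegrableOn (fun x => u x ^ 2) UI ∧ (∫ x in UI, u x ^ 2) ≤ 1 ∧
      t = |∫ x in UI, ∫ y in UI, u x * c * u y|}, t ≤ c := by
    rintro t ⟨u, hum, hu2, hu21, rfl⟩
    have huint : Integrable u μUI := int_of_sq hum.aestronglyMeasurable hu2
    have hin : ∀ x : ℝ, (∫ y, u x * c * u y ∂μUI) = u x * c * ∫ y, u y ∂μUI :=
      fun x => integral_const_mul _ _
    have hout : (∫ x, ∫ y, u x * c * u y ∂μUI ∂μUI)
        = c * (∫ x, u x ∂μUI) * (∫ x, u x ∂μUI) := by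
      rw [show (∫ x, ∫ y, u x * c * u y ∂μUI ∂μUI)
          = ∫ x, (c * (∫ y, u y ∂μUI)) * u x ∂μUI from
        integral_congr_ae (Eventually.of_forall fun x => by
          show (∫ y, u x * c * u y ∂μUI) = (c * ∫ y, u y ∂μUI) * u x
          rw [hin x]; ring)]
      rw [integral_const_mul]
    have hm1 : |∫ x, u x ∂μUI| ≤ 1 := by
      have hone : Integrable (fun x : ℝ => (1:ℝ) ^ 2) μUI := by
        simpa using integrable_const (1:ℝ)
      have hc := cs (f := u) (g := fun _ => (1:ℝ)) hum.aestronglyMeasurable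
        aestronglyMeasurable_const hu2 hone
      simp only [mul_one, one_pow] at hc
      have h1 : (∫ (_ : ℝ), (1:ℝ) ∂μUI) = 1 := by simp [measure_univ]
      rw [h1, Real.sqrt_one, mul_one] at hc
      refine le_trans hc ?_
      calc Real.sqrt (∫ x, u x ^ 2 ∂μUI) ≤ Real.sqrt 1 := Real.sqrt_le_sqrt hu21
        _ = 1 := Real.sqrt_one
    rw [hout, abs_mul, abs_mul, abs_of_nonneg hc0]
    calc c * |∫ x, u x ∂μUI| * |∫ x, u x ∂μUI|
        ≤ c * 1 * 1 := by
          refine mul_le_mul (mul_le_mul le_rfl hm1 (abs_nonneg _) hc0) hm1 (abs_nonneg _) ?_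
          positivity
      _ = c := by ring
  have hmem : c ∈ {t : ℝ | ∃ u : ℝ → ℝ, Measurable u ∧
      IntegrableOn (fun x => u x ^ 2) UI ∧ (∫ x in UI, u x ^ 2) ≤ 1 ∧
      t = |∫ x in UI, ∫ y in UI, u x * c * u y|} := by
    refine ⟨fun _ => 1, measurable_const, ?_, ?_, ?_⟩
    · have : (fun x : ℝ => (1:ℝ) ^ 2) = fun _ : ℝ => (1:ℝ) := by funext x; norm_num
      rw [this]
      exact (integrableOn_const_iff).mpr (Or.inr (by simp [UI, Real.volume_Icc]))
    · have : (fun x : ℝ => (1:ℝ) ^ 2) = fun _ : ℝ => (1:ℝ) := by funext x; norm_num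
      rw [this]
      simp [measure_univ]
    · have h1 : (∫ x in UI, ∫ y in UI, (1:ℝ) * c * 1) = c := by
        have hin : ∀ x : ℝ, (∫ y, (1:ℝ) * c * 1 ∂μUI) = c := by
          intro x
          simp [measure_univ]
        rw [show (∫ x, ∫ y, (1:ℝ) * c * 1 ∂μUI ∂μUI) = ∫ (_ : ℝ), c ∂μUI from
          integral_congr_ae (Eventually.of_forall fun x => hin x)]
        simp [measure_univ]
      rw [h1, abs_of_nonneg hc0]
  exact le_antisymm (csSup_le ⟨0, h0S⟩ hub)
    (le_csSup ⟨c, hub⟩ hmem)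

end Aux

/-- upper bound on the cost gain near β = 1:
I_r(1) − I_r(1−Δ) ≤ ε log(1/ε) + Cε, and C¹_r − ψ_r(1−ε) ≤ ε log(1/ε) + Cε. -/
theorem cost_upper_bound_near_one
    (r : ℝ → ℝ → ℝ) (η : ℝ) (hη : 0 < η)
    (hrmeas : Measurable (Function.uncurry r))
    (hrsymm : ∀ x y, r x y = r y x)
    (hrbound : ∀ x ∈ UI, ∀ y ∈ UI, r x y ∈ Set.Icc η (1 - η)) :
    ∃ C > (0:ℝ), ∃ ε₀ ∈ Set.Ioo (0:ℝ) 1,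
      (∀ ε ∈ Set.Ioo (0:ℝ) ε₀, ∀ Δ : ℝ → ℝ → ℝ,
        Measurable (Function.uncurry Δ) → (∀ x y, Δ x y = Δ y x) →
        (∀ x ∈ UI, ∀ y ∈ UI, Δ x y ∈ Set.Icc (0:ℝ) 1) →
        gOpNorm (fun x y => 1 - Δ x y) = 1 - ε →
          Ient r (fun _ _ => 1) - Ient r (fun x y => 1 - Δ x y)
            ≤ ε * Real.log (1 / ε) + C * ε) ∧
      (∀ ε ∈ Set.Ioo (0:ℝ) ε₀,
        Ient r (fun _ _ => 1) - psiRate r (1 - ε) ≤ ε * Real.log (1 / ε) + C * ε) := by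
  obtain ⟨hr1, hr2⟩ := hrbound 0 Aux.UI0 0 Aux.UI0
  have hη2 : η ≤ 1/2 := by linarith
  have hLη0 : 0 ≤ Real.log (1/η) :=
    Real.log_nonneg (by rw [le_div_iff₀ hη]; linarith)
  refine ⟨15 * Real.log (1/η) + 45, by linarith, 1/2, by norm_num, ?_, ?_⟩
  · intro ε hε Δ hΔm _ hΔb hnorm
    exact Aux.core hη hrmeas hrbound hε.1 hε.2 hΔm hΔb hnorm
  · rintro ε ⟨hε0, hεh⟩
    have hε1 : ε < 1 := by linarith
    have hPne : {c : ℝ | ∃ h : ℝ → ℝ → ℝ, IsGraphon h ∧ gOpNorm h = 1 - ε ∧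
        Ient r h = c}.Nonempty := by
      refine ⟨Ient r (fun _ _ => 1 - ε), fun _ _ => 1 - ε, ⟨?_, fun _ _ => rfl, ?_⟩, ?_, rfl⟩
      · have : (Function.uncurry fun (_ _ : ℝ) => 1 - ε) = fun _ => 1 - ε := rfl
        rw [this]; exact measurable_const
      · intro x _ y _
        refine ⟨?_, ?_⟩
        · show (0:ℝ) ≤ 1 - ε
          linarith
        · show (1:ℝ) - ε ≤ 1
          linarith
      · exact Aux.gOpNorm_const (by linarith) (by linarith)
    have hlow : ∀ c ∈ {c : ℝ | ∃ h : ℝ → ℝ → ℝ, IsGraphon h ∧ gOpNorm h = 1 - ε ∧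
        Ient r h = c},
        Ient r (fun _ _ => 1) - (ε * Real.log (1 / ε)
          + (15 * Real.log (1/η) + 45) * ε) ≤ c := by
      rintro c ⟨h, ⟨hhm, _, hhb⟩, hn, rfl⟩
      have hfun : (fun x y => 1 - (1 - h x y)) = h := by
        funext x y; ring
      have hΔm : Measurable (Function.uncurry fun x y => 1 - h x y) := by
        have : (Function.uncurry fun x y => 1 - h x y)
            = fun p => 1 - Function.uncurry h p := rfl
        rw [this]; exact measurable_const.sub hhm
      have hΔb : ∀ x ∈ UI, ∀ y ∈ UI, (fun x y => 1 - h x y) x y ∈ Set.Icc (0:ℝ) 1 := by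
        intro x hx y hy
        obtain ⟨h1, h2⟩ := hhb x hx y hy
        exact ⟨by simpa using h2, by simp; linarith⟩
      have hnorm' : gOpNorm (fun x y => 1 - (fun x y => 1 - h x y) x y) = 1 - ε := by
        have : (fun x y => 1 - (fun x y => 1 - h x y) x y) = h := hfun
        rw [this]; exact hn
      have := Aux.core hη hrmeas hrbound hε0 hεh hΔm hΔb hnorm'
      have hIeq : Ient r (fun x y => 1 - (fun x y => 1 - h x y) x y) = Ient r h := by
        rw [hfun]
      rw [hIeq] at this
      linarith
    have hinf := le_csInf hPne hlow
    have : psiRate r (1 - ε) = sInf {c : ℝ | ∃ h : ℝ → ℝ → ℝ, IsGraphon h ∧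
        gOpNorm h = 1 - ε ∧ Ient r h = c} := rfl
    rw [this]
    linarith
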